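/- arXiv:2104.11439 — 12 statements merged into one kernel-verified Lean document; each statement's English description precedes it below -/
import Mathlib

section
/- Let R be a commutative Bézout domain of stable range 1.5, m ∈ R neither zero nor a unit, and R_m = R/mR. If a, b ∈ R_m are such that the linear equation b = a·x is solvable in R_m, then there exists a solution c ∈ R_m (i.e., b = a·c) such that c divides every solution of this equation (such a solution is called a generating solution). -/
/-- A commutative ring has stable range 1.5 if for all `a b c` with `c ≠ 0` and
`gcd(a, b, c)` a unit (i.e. every common divisor of `a`, `b`, `c` is a unit),
there exists `r` such that `gcd(a + b*r, c)` is a unit. -/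
def HasStableRange15 (R : Type*) [CommRing R] : Prop :=
  ∀ a b c : R, c ≠ 0 → (∀ d : R, d ∣ a → d ∣ b → d ∣ c → IsUnit d) →
    ∃ r : R, ∀ d : R, d ∣ a + b * r → d ∣ c → IsUnit d

/-- Every solvable linear equation `b = a * x` in `R/mR` has a generating solution,
i.e. a solution dividing every solution. -/
theorem exists_generating_solution
    {R : Type*} [CommRing R] [IsDomain R] [IsBezout R]
    (hsr : HasStableRange15 R)
    (m : R) (hm0 : m ≠ 0) (hmu : ¬ IsUnit m)
    (a b : R ⧸ Ideal.span {m})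
    (hsolv : ∃ x : R ⧸ Ideal.span {m}, b = a * x) :
    ∃ c : R ⧸ Ideal.span {m}, b = a * c ∧
      ∀ x : R ⧸ Ideal.span {m}, b = a * x → c ∣ x := by
  classical
  obtain ⟨x₀, hx₀⟩ := hsolv
  obtain ⟨A, hA⟩ := Ideal.Quotient.mk_surjective a
  obtain ⟨X₀, hX₀⟩ := Ideal.Quotient.mk_surjective x₀
  have hb : b = Ideal.Quotient.mk (Ideal.span {m}) (A * X₀) := by
    rw [map_mul, hA, hX₀]; exact hx₀
  -- d = gcd(A, m), A = d * A', m = d * m'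
  obtain ⟨A', hA'⟩ : IsBezout.gcd A m ∣ A := IsBezout.gcd_dvd_left A m
  obtain ⟨m', hm'⟩ : IsBezout.gcd A m ∣ m := IsBezout.gcd_dvd_right A m
  set d := IsBezout.gcd A m with hd
  have hd0 : d ≠ 0 := fun h => hm0 (by rw [hm', h, zero_mul])
  have hm'0 : m' ≠ 0 := fun h => hm0 (by rw [hm', h, mul_zero])
  -- A' and m' are relatively prime
  have hcoprimeA'm' : IsRelPrime A' m' := by
    intro g hgA' hgm'
    obtain ⟨v, hv⟩ : d * g ∣ d := by
      refine IsBezout.dvd_gcd ?_ ?_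
      · rw [hA']; exact mul_dvd_mul_left d hgA'
      · rw [hm']; exact mul_dvd_mul_left d hgm'
    rw [mul_assoc] at hv
    exact IsUnit.of_mul_eq_one (a := g) v (mul_left_cancel₀ hd0 (by linear_combination hv)).symm
  -- e = gcd(X₀, m'), X₀ = e * X₁, m' = e * m₁
  obtain ⟨X₁, hX₁⟩ : IsBezout.gcd X₀ m' ∣ X₀ := IsBezout.gcd_dvd_left X₀ m'
  obtain ⟨m₁, hm₁⟩ : IsBezout.gcd X₀ m' ∣ m' := IsBezout.gcd_dvd_right X₀ m'
  set e := IsBezout.gcd X₀ m' with he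
  have he0 : e ≠ 0 := fun h => hm'0 (by rw [hm₁, h, zero_mul])
  have hcop1 : IsRelPrime X₁ m₁ := by
    intro g hgX₁ hgm₁
    obtain ⟨v, hv⟩ : e * g ∣ e := by
      refine IsBezout.dvd_gcd ?_ ?_
      · rw [hX₁]; exact mul_dvd_mul_left e hgX₁
      · rw [hm₁]; exact mul_dvd_mul_left e hgm₁
    rw [mul_assoc] at hv
    exact IsUnit.of_mul_eq_one (a := g) v (mul_left_cancel₀ he0 (by linear_combination hv)).symm
  -- apply stable range 1.5
  obtain ⟨r, hr⟩ := hsr X₁ m₁ m hm0 (fun g h1 h2 _ => hcop1 h1 h2)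
  -- C = X₀ + m' * r
  have hCe : X₀ + m' * r = e * (X₁ + m₁ * r) := by rw [hX₁, hm₁]; ring
  -- every common divisor of C and m divides m'
  have hgdvd : ∀ g : R, g ∣ X₀ + m' * r → g ∣ m → g ∣ m' := by
    intro g hgC hgm
    have hum : IsRelPrime (X₁ + m₁ * r) m := fun t ht1 ht2 => hr t ht1 ht2
    obtain ⟨p, q, hpq⟩ := hum.isCoprime
    have hge : g ∣ e := by
      have h1 : g ∣ e * (X₁ + m₁ * r) := hCe ▸ hgC
      have h2 : g ∣ e * m := hgm.mul_left e
      have : e = (e * (X₁ + m₁ * r)) * p + (e * m) * q := by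
        linear_combination e * hpq.symm
      rw [this]
      exact dvd_add (h1.mul_right p) (h2.mul_right q)
    exact hm₁ ▸ hge.mul_right m₁
  -- m' is a combination of C and m
  obtain ⟨z, w, hzw⟩ : ∃ z w : R, z * (X₀ + m' * r) + w * m = m' := by
    apply Ideal.mem_span_pair.mp
    rw [← IsBezout.span_gcd, Ideal.mem_span_singleton]
    exact hgdvd _ (IsBezout.gcd_dvd_left _ m) (IsBezout.gcd_dvd_right _ m)
  refine ⟨Ideal.Quotient.mk (Ideal.span {m}) (X₀ + m' * r), ?_, ?_⟩
  · -- b = a * π C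
    rw [hb, ← hA, ← map_mul, Ideal.Quotient.eq, Ideal.mem_span_singleton]
    exact ⟨-(A' * r), by rw [hA']; linear_combination (A' * r) * hm'⟩
  · -- generating property
    intro x hx
    obtain ⟨X, hX⟩ := Ideal.Quotient.mk_surjective x
    have h1 : m ∣ A * X₀ - A * X := by
      rw [← Ideal.mem_span_singleton, ← Ideal.Quotient.eq, map_mul, map_mul, hA, hX, hX₀,
        ← hx₀, ← hx]
    obtain ⟨k, hk⟩ := h1
    -- cancel d : m' ∣ A' * (X₀ - X)
    have h2 : m' ∣ A' * (X₀ - X) := by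
      refine ⟨k, mul_left_cancel₀ hd0 ?_⟩
      rw [hm'] at hk
      rw [hA'] at hk
      linear_combination hk
    -- coprimality gives m' ∣ X₀ - X
    obtain ⟨p, q, hpq⟩ := hcoprimeA'm'.isCoprime
    have h3 : m' ∣ X₀ - X := by
      have hEq : X₀ - X = (A' * (X₀ - X)) * p + m' * (q * (X₀ - X)) := by
        linear_combination (X₀ - X) * hpq.symm
      rw [hEq]
      exact dvd_add (h2.mul_right p) (Dvd.intro _ rfl)
    obtain ⟨t, ht⟩ := h3
    -- π C divides π m'
    have hCdvdm' : Ideal.Quotient.mk (Ideal.span {m}) (X₀ + m' * r) ∣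
        Ideal.Quotient.mk (Ideal.span {m}) m' := by
      refine ⟨Ideal.Quotient.mk (Ideal.span {m}) z, ?_⟩
      rw [← map_mul, Ideal.Quotient.eq, Ideal.mem_span_singleton]
      exact ⟨w, by linear_combination -hzw⟩
    -- x = π C + π m' * π (-t - r)
    have hxeq : x = Ideal.Quotient.mk (Ideal.span {m}) (X₀ + m' * r) +
        Ideal.Quotient.mk (Ideal.span {m}) m' *
        Ideal.Quotient.mk (Ideal.span {m}) (-t - r) := by
      rw [← hX, ← map_mul, ← map_add]
      congr 1
      linear_combination -ht
    rw [hxeq]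
    exact dvd_add (dvd_refl _) (hCdvdm'.mul_right _)
end

section
/- Let R be a commutative Bézout domain of stable range 1.5, m ∈ R neither zero nor a unit, and R_m = R/mR. If c and c′ are both generating solutions of a solvable linear equation b = a·x in R_m (that is, b = a·c, b = a·c′, and each of c, c′ divides every solution of the equation), then c and c′ are associates in R_m, i.e., c′ = c·u for some unit u of R_m. -/
/-- In `R/mR`, comaximal pairs can be completed to a unit: if `s*t + y = 1`, then
`s + y*r` is a unit for some `r`. -/
theorem stable_range_one_quotient
    {R : Type*} [CommRing R] [IsDomain R] [IsBezout R]
    (hsr : HasStableRange15 R)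
    (m : R) (hm0 : m ≠ 0)
    (s y t : R ⧸ Ideal.span {m}) (h : s * t + y = 1) :
    ∃ r : R ⧸ Ideal.span {m}, IsUnit (s + y * r) := by
  obtain ⟨S, rfl⟩ := Ideal.Quotient.mk_surjective s
  obtain ⟨Y, rfl⟩ := Ideal.Quotient.mk_surjective y
  obtain ⟨T, rfl⟩ := Ideal.Quotient.mk_surjective t
  have hmem : S * T + Y - 1 ∈ Ideal.span ({m} : Set R) := by
    rw [← Ideal.Quotient.eq_zero_iff_mem, map_sub, map_add, map_mul, map_one, h, sub_self]
  obtain ⟨k, hk⟩ := Ideal.mem_span_singleton'.mp hmem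
  have hone : 1 = S * T + Y + m * (-k) := by linear_combination hk
  have hcop : ∀ d : R, d ∣ S → d ∣ Y → d ∣ m → IsUnit d := by
    intro d hS hY hM
    exact isUnit_of_dvd_one (hone ▸ dvd_add (dvd_add (hS.mul_right T) hY) (hM.mul_right _))
  obtain ⟨r, hr⟩ := hsr S Y m hm0 hcop
  have hrel : IsRelPrime (S + Y * r) m := fun d hd hdm => hr d hd hdm
  obtain ⟨u, v, huv⟩ := isRelPrime_iff_isCoprime.mp hrel
  refine ⟨Ideal.Quotient.mk _ r, ?_⟩
  have hm : (Ideal.Quotient.mk (Ideal.span {m})) m = 0 := by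
    rw [Ideal.Quotient.eq_zero_iff_mem]; exact Ideal.subset_span rfl
  have h2 : (Ideal.Quotient.mk (Ideal.span {m})) u *
      (Ideal.Quotient.mk _ S + Ideal.Quotient.mk _ Y * Ideal.Quotient.mk _ r) = 1 := by
    have := congrArg (Ideal.Quotient.mk (Ideal.span {m})) huv
    rw [map_add, map_mul, map_mul, map_add, map_mul, map_one, hm, mul_zero, add_zero] at this
    exact this
  exact IsUnit.of_mul_eq_one _ (by rw [mul_comm]; exact h2)

/-- Any two generating solutions of a solvable linear equation `b = a * x` in `R/mR`
are associates. -/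
theorem generating_solutions_associates
    {R : Type*} [CommRing R] [IsDomain R] [IsBezout R]
    (hsr : HasStableRange15 R)
    (m : R) (hm0 : m ≠ 0) (hmu : ¬ IsUnit m)
    (a b c c' : R ⧸ Ideal.span {m})
    (hc : b = a * c) (hcgen : ∀ x : R ⧸ Ideal.span {m}, b = a * x → c ∣ x)
    (hc' : b = a * c') (hc'gen : ∀ x : R ⧸ Ideal.span {m}, b = a * x → c' ∣ x) :
    ∃ u : (R ⧸ Ideal.span {m})ˣ, c' = c * u := by
  obtain ⟨s, hs⟩ := hcgen c' hc'
  obtain ⟨t, ht⟩ := hc'gen c hc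
  have hcst : c = c * s * t := by rw [← hs, ← ht]
  have hz : c * (1 - s * t) = 0 := by linear_combination hcst
  obtain ⟨r, hu⟩ := stable_range_one_quotient hsr m hm0 s (1 - s * t) t (by ring)
  obtain ⟨u, huval⟩ := hu
  refine ⟨u, ?_⟩
  rw [huval, hs]
  linear_combination (-r) * hz
end

section
/- Let R be a commutative Bézout domain of stable range 1.5, m ∈ R neither zero nor a unit, and R_m = R/mR, with x̄ the image of x ∈ R in R_m. For a, b ∈ R, the elements ā and b̄ are associates in R_m (i.e., ā = b̄·ū for some unit ū of R_m) if and only if gcd(a, m) and gcd(b, m) are associates in R. -/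
section Aux
variable {R : Type*} [CommRing R] [IsDomain R] [IsBezout R]

/-- If `gcd(x, m)` is a unit, then `x` is a unit mod `m`. -/
lemma isUnit_mk_of_isRelPrime {m x : R} (h : IsRelPrime x m) :
    IsUnit (Ideal.Quotient.mk (Ideal.span {m}) x) := by
  obtain ⟨s, t, hst⟩ := h.isCoprime
  refine IsUnit.of_mul_eq_one (Ideal.Quotient.mk _ s) ?_
  have : (Ideal.Quotient.mk (Ideal.span {m})) (s * x + t * m) = 1 := by rw [hst]; simp
  simpa [mul_comm, Ideal.Quotient.eq_zero_iff_mem, Ideal.mem_span_singleton.2 (dvd_refl m),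
    Ideal.Quotient.eq_zero_iff_mem.2 (Ideal.mem_span_singleton.2 (dvd_refl m))] using this

/-- Given `d = gcd(a, m)`, there is `u` coprime to `m` with `d * u ≡ a [mod m]`. -/
lemma exists_relprime_rep (hsr : HasStableRange15 R) {m : R} (hm0 : m ≠ 0)
    {a d : R} (hd1 : d ∣ a) (hd2 : d ∣ m) (hd3 : ∀ x : R, x ∣ a → x ∣ m → x ∣ d) :
    ∃ u : R, IsRelPrime u m ∧
      Ideal.Quotient.mk (Ideal.span {m}) (d * u) = Ideal.Quotient.mk (Ideal.span {m}) a := by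
  have hd0 : d ≠ 0 := fun h => hm0 (by simpa [h] using hd2)
  obtain ⟨a', ha'⟩ := hd1
  obtain ⟨m', hm'⟩ := hd2
  have hcop : ∀ e : R, e ∣ a' → e ∣ m' → e ∣ m → IsUnit e := by
    intro e he1 he2 _
    have h1 : d * e ∣ a := ha' ▸ mul_dvd_mul_left d he1
    have h2 : d * e ∣ m := hm' ▸ mul_dvd_mul_left d he2
    have := hd3 _ h1 h2
    obtain ⟨k, hk⟩ := this
    have : d * (e * k) = d * 1 := by rw [mul_one]; linear_combination -hk
    exact IsUnit.of_mul_eq_one k (mul_left_cancel₀ hd0 this)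
  obtain ⟨r, hr⟩ := hsr a' m' m hm0 hcop
  refine ⟨a' + m' * r, fun e he1 he2 => hr e he1 he2, ?_⟩
  have : d * (a' + m' * r) - a = m * r := by rw [ha', hm']; ring
  rw [Ideal.Quotient.mk_eq_mk_iff_sub_mem, this]
  exact Ideal.mem_span_singleton.2 ⟨r, rfl⟩

end Aux

/-- `ā` and `b̄` are associates in `R/mR` iff `gcd(a, m)` and `gcd(b, m)` are
associates in `R`. -/
theorem quotient_associates_iff_gcd_associates
    {R : Type*} [CommRing R] [IsDomain R] [IsBezout R]
    (hsr : HasStableRange15 R)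
    (m : R) (hm0 : m ≠ 0) (hmu : ¬ IsUnit m)
    (a b : R)
    (da : R) (hda1 : da ∣ a) (hda2 : da ∣ m) (hda3 : ∀ x : R, x ∣ a → x ∣ m → x ∣ da)
    (db : R) (hdb1 : db ∣ b) (hdb2 : db ∣ m) (hdb3 : ∀ x : R, x ∣ b → x ∣ m → x ∣ db) :
    (∃ u : (R ⧸ Ideal.span {m})ˣ,
        Ideal.Quotient.mk (Ideal.span {m}) a = Ideal.Quotient.mk (Ideal.span {m}) b * u) ↔
      (∃ u : Rˣ, da = db * u) := by
  set f := Ideal.Quotient.mk (Ideal.span {m}) with hf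
  constructor
  · rintro ⟨u, hu⟩
    -- lift u to w ∈ R, coprime to m
    obtain ⟨w, hw⟩ := Ideal.Quotient.mk_surjective (u : R ⧸ Ideal.span {m})
    obtain ⟨s, hs⟩ := Ideal.Quotient.mk_surjective ((u⁻¹ : (R ⧸ Ideal.span {m})ˣ) : R ⧸ Ideal.span {m})
    have hws : f (w * s) = 1 := by
      rw [map_mul, hw, hs, Units.mul_inv]
    have hws' : m ∣ w * s - 1 := by
      rw [← Ideal.mem_span_singleton, ← Ideal.Quotient.eq_zero_iff_mem]
      show f _ = 0
      rw [map_sub, map_one, hws, sub_self]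
    obtain ⟨t, ht⟩ := hws'
    -- a ≡ b * w mod m
    have hab : m ∣ a - b * w := by
      rw [← Ideal.mem_span_singleton, ← Ideal.Quotient.mk_eq_mk_iff_sub_mem]
      rw [hu, map_mul, hw]
    obtain ⟨t', ht'⟩ := hab
    have hdbda : db ∣ da := by
      apply hda3
      · have : a = b * w + m * t' := by linear_combination ht'
        rw [this]
        exact dvd_add (Dvd.dvd.mul_right hdb1 w) (Dvd.dvd.mul_right hdb2 t')
      · exact hdb2
    have hcop : IsCoprime da w := by
      apply IsRelPrime.isCoprime
      intro e he1 he2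
      have hem : e ∣ m := he1.trans hda2
      have : e ∣ 1 := by
        have h1 : e ∣ w * s := he2.mul_right s
        have h2 : e ∣ m * t := hem.mul_right t
        have : (1 : R) = w * s - m * t := by linear_combination -ht
        rw [this]; exact dvd_sub h1 h2
      exact isUnit_of_dvd_one this
    have hdadb : da ∣ db := by
      apply hdb3
      · -- da ∣ b
        have hbw : da ∣ b * w := by
          have : b * w = a - m * t' := by linear_combination -ht'
          rw [this]; exact dvd_sub hda1 (hda2.mul_right t')
        obtain ⟨p, q, hpq⟩ := hcop
        have hb : b = da * (p * b) + (b * w) * q := by linear_combination (-b) * hpq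
        rw [hb]
        exact dvd_add (dvd_mul_right da (p * b)) (hbw.mul_right q)
      · exact hda2
    have := (associated_of_dvd_dvd hdbda hdadb)
    obtain ⟨u, hu'⟩ := this
    exact ⟨u, hu'.symm⟩
  · rintro ⟨v, hv⟩
    obtain ⟨ua, hua, hua'⟩ := exists_relprime_rep hsr hm0 hda1 hda2 hda3
    obtain ⟨ub, hub, hub'⟩ := exists_relprime_rep hsr hm0 hdb1 hdb2 hdb3
    have Ua : IsUnit (f ua) := isUnit_mk_of_isRelPrime hua
    have Ub : IsUnit (f ub) := isUnit_mk_of_isRelPrime hub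
    obtain ⟨Uau, hUa⟩ := Ua
    obtain ⟨Ubu, hUb⟩ := Ub
    refine ⟨Ubu⁻¹ * (v.map (f : R →* _)) * Uau, ?_⟩
    have hfa : f a = f da * f ua := by rw [← map_mul, hua']
    have hfb : f b = f db * f ub := by rw [← map_mul, hub']
    have hfdb : f db = f b * ↑Ubu⁻¹ := by
      rw [hfb, ← hUb, mul_assoc, Units.mul_inv, mul_one]
    rw [hfa, hv, map_mul, hfdb]
    have hcoe : ((Ubu⁻¹ * (v.map (f : R →* _)) * Uau : (R ⧸ Ideal.span {m})ˣ) :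
        R ⧸ Ideal.span {m}) = ↑Ubu⁻¹ * f ↑v * f ua := by
      push_cast [Units.coe_map, ← hUa]
      rfl
    rw [hcoe]
    ring
end

section
/- Let R be a commutative Bézout domain of stable range 1.5, m ∈ R neither zero nor a unit, and R_m = R/mR, with x̄ the image of x ∈ R in R_m. For every a ∈ R there exists a unit ē of R_m such that ā = d̄·ē, where d is a greatest common divisor of a and m in R. -/
/-- Every `ā ∈ R/mR` can be written as `d̄ · ē` where `d = gcd(a, m)` and `ē` is a unit
of `R/mR`. -/
theorem quotient_eq_gcd_mul_unit
    {R : Type*} [CommRing R] [IsDomain R] [IsBezout R]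
    (hsr : HasStableRange15 R)
    (m : R) (hm0 : m ≠ 0) (hmu : ¬ IsUnit m)
    (a : R)
    (d : R) (hd1 : d ∣ a) (hd2 : d ∣ m) (hd3 : ∀ x : R, x ∣ a → x ∣ m → x ∣ d) :
    ∃ e : (R ⧸ Ideal.span {m})ˣ,
      Ideal.Quotient.mk (Ideal.span {m}) a = Ideal.Quotient.mk (Ideal.span {m}) d * e := by
  obtain ⟨a', ha'⟩ := hd1
  obtain ⟨m', hm'⟩ := hd2
  have hd0 : d ≠ 0 := by rintro rfl; exact hm0 (by simpa using hm')
  obtain ⟨r, hr⟩ := hsr a' m' m hm0 (by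
    intro t ht1 ht2 _
    obtain ⟨s, hs⟩ := ht1
    obtain ⟨u, hu⟩ := ht2
    have h : d * t ∣ d := hd3 (d * t) ⟨s, by rw [ha', hs]; ring⟩ ⟨u, by rw [hm', hu]; ring⟩
    have h2 : d * t ∣ d * 1 := by simpa using h
    have : t ∣ 1 := (mul_dvd_mul_iff_left hd0).mp h2
    exact isUnit_of_dvd_one this)
  set e := a' + m' * r with he
  -- e and m are coprime, so e is a unit mod m
  have hcop : ∀ t : R, t ∣ e → t ∣ m → IsUnit t := hr
  have hg1 : IsBezout.gcd e m ∣ e := IsBezout.gcd_dvd_left e m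
  have hg2 : IsBezout.gcd e m ∣ m := IsBezout.gcd_dvd_right e m
  have hgu : IsUnit (IsBezout.gcd e m) := hcop _ hg1 hg2
  obtain ⟨u, v, huv⟩ : ∃ u v : R, u * e + v * m = 1 := by
    obtain ⟨c, hc⟩ := hgu.exists_left_inv
    obtain ⟨u, v, huv⟩ := IsBezout.gcd_eq_sum e m
    exact ⟨c * u, c * v, by rw [← huv] at hc; linear_combination hc⟩
  have hme : (Ideal.Quotient.mk (Ideal.span {m}) (v * m)) = 0 := by
    rw [Ideal.Quotient.eq_zero_iff_mem]
    exact Ideal.mul_mem_left _ _ (Ideal.subset_span rfl)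
  have hunit : IsUnit (Ideal.Quotient.mk (Ideal.span {m}) e) := by
    refine IsUnit.of_mul_eq_one (Ideal.Quotient.mk _ u) ?_
    rw [← map_mul]
    have : e * u = 1 - v * m := by linear_combination huv
    rw [this, map_sub, hme, map_one, sub_zero]
  obtain ⟨E, hE⟩ := hunit
  refine ⟨E, ?_⟩
  rw [hE, ← map_mul, Ideal.Quotient.eq]
  refine Ideal.mem_span_singleton.mpr ⟨-r, ?_⟩
  rw [ha', he, hm']
  ring
end

section
/- Let R be a commutative Bézout domain of stable range 1.5, m ∈ R neither zero nor a unit, and R_m = R/mR. If two elements a, b ∈ R_m divide each other (a ∣ b and b ∣ a in R_m), then a and b are associates in R_m, i.e., a = b·u for some unit u of R_m. -/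
/-- In `R/mR`, mutually dividing elements are associates. -/
theorem associates_of_dvd_dvd_quotient
    {R : Type*} [CommRing R] [IsDomain R] [IsBezout R]
    (hsr : HasStableRange15 R)
    (m : R) (hm0 : m ≠ 0) (hmu : ¬ IsUnit m)
    (a b : R ⧸ Ideal.span {m}) (hab : a ∣ b) (hba : b ∣ a) :
    ∃ u : (R ⧸ Ideal.span {m})ˣ, a = b * u := by
  obtain ⟨A, rfl⟩ := Ideal.Quotient.mk_surjective a
  obtain ⟨B, rfl⟩ := Ideal.Quotient.mk_surjective b
  obtain ⟨c, hc⟩ := hab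
  obtain ⟨C, rfl⟩ := Ideal.Quotient.mk_surjective c
  obtain ⟨s, hs⟩ := hba
  obtain ⟨S, rfl⟩ := Ideal.Quotient.mk_surjective s
  rw [← map_mul, Ideal.Quotient.eq, Ideal.mem_span_singleton] at hc hs
  -- hc : m ∣ B - A * C, hs : m ∣ A - B * S
  obtain ⟨A₁, hA1⟩ := IsBezout.gcd_dvd_left A m
  obtain ⟨m₁, hm1⟩ := IsBezout.gcd_dvd_right A m
  set d := IsBezout.gcd A m with hd
  have hd0 : d ≠ 0 := fun h => hm0 (by rw [hm1, h, zero_mul])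
  obtain ⟨x, y, hxy⟩ := IsBezout.gcd_eq_sum A m
  have h1 : x * A₁ + y * m₁ = 1 := by
    apply mul_left_cancel₀ hd0
    calc d * (x * A₁ + y * m₁) = x * (d * A₁) + y * (d * m₁) := by ring
    _ = d * 1 := by rw [← hA1, ← hm1, hxy, mul_one]
  obtain ⟨t, ht⟩ := hc
  have hB1 : B = d * (A₁ * C + m₁ * t) := by
    have hB : B = A * C + m * t := by linear_combination ht
    rw [hB, hA1, hm1]; ring
  set B₁ := A₁ * C + m₁ * t with hB1def
  obtain ⟨w, hw⟩ := hs
  have hs1 : A₁ - B₁ * S = m₁ * w := by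
    apply mul_left_cancel₀ hd0
    calc d * (A₁ - B₁ * S) = (d * A₁) - (d * B₁) * S := by ring
    _ = A - B * S := by rw [← hA1, ← hB1]
    _ = m * w := hw
    _ = d * (m₁ * w) := by rw [hm1]; ring
  have hcop : ∀ e : R, e ∣ S → e ∣ m₁ → e ∣ m → IsUnit e := by
    intro e heS hem1 _
    have heA1 : e ∣ A₁ := by
      have hA₁ : A₁ = B₁ * S + m₁ * w := by linear_combination hs1
      rw [hA₁]; exact dvd_add (heS.mul_left B₁) (hem1.mul_right w)
    exact isUnit_of_dvd_one (by rw [← h1]; exact dvd_add (heA1.mul_left x) (hem1.mul_left y))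
  obtain ⟨r, hr⟩ := hsr S m₁ m hm0 hcop
  have hrel : IsRelPrime (S + m₁ * r) m := fun e he hem => hr e he hem
  obtain ⟨p, q, hpq⟩ := hrel.isCoprime
  have hUnit : IsUnit (Ideal.Quotient.mk (Ideal.span {m}) (S + m₁ * r)) := by
    apply IsUnit.of_mul_eq_one (Ideal.Quotient.mk _ p)
    rw [← map_mul, ← map_one (Ideal.Quotient.mk (Ideal.span {m})), Ideal.Quotient.eq,
      Ideal.mem_span_singleton]
    exact ⟨-q, by linear_combination hpq⟩
  obtain ⟨u, hu⟩ := hUnit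
  refine ⟨u, ?_⟩
  rw [hu, ← map_mul, Ideal.Quotient.eq, Ideal.mem_span_singleton]
  exact ⟨w - B₁ * r, by linear_combination hw - (m₁ * r) * hB1 + (B₁ * r) * hm1⟩
end

section
/- Let R be a commutative Bézout domain of stable range 1.5, m ∈ R neither zero nor a unit, and R_m = R/mR. Let φ₁, φ₂, φ₃ ∈ R_m with φ₁ ∣ φ₂ ∣ φ₃ and φ₃ ≠ 0. If ψ₂₁ is a generating solution of the equation φ₂ = φ₁·x and ψ₃₂ is a generating solution of the equation φ₃ = φ₂·x, then the product ψ₂₁·ψ₃₂ is a generating solution of the equation φ₃ = φ₁·x; in particular, for any generating solution ψ₃₁ of φ₃ = φ₁·x there is a unit e of R_m with ψ₂₁·ψ₃₂ = ψ₃₁·e. -/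
section Aux
variable {R : Type*} [CommRing R] [IsDomain R] [IsBezout R] [GCDMonoid R]

open Ideal

set_option linter.unusedSectionVars false

lemma mk_dvd_mk_iff (m x y : R) :
    (Ideal.Quotient.mk (Ideal.span {m}) x ∣ Ideal.Quotient.mk (Ideal.span {m}) y) ↔
      gcd x m ∣ y := by
  rw [gcd_dvd_iff_exists]
  constructor
  · rintro ⟨c, hc⟩
    obtain ⟨c₀, rfl⟩ := Ideal.Quotient.mk_surjective c
    rw [← _root_.map_mul, Ideal.Quotient.eq, Ideal.mem_span_singleton] at hc
    obtain ⟨k, hk⟩ := hc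
    exact ⟨c₀, k, by linear_combination hk⟩
  · rintro ⟨u, v, rfl⟩
    refine ⟨Ideal.Quotient.mk _ u, ?_⟩
    rw [← _root_.map_mul, Ideal.Quotient.eq, Ideal.mem_span_singleton]
    exact ⟨v, by ring⟩

lemma dvd_of_gcd_mul (m a m' z : R) (hm : m ≠ 0) (hmm : gcd a m * m' = m)
    (h : m ∣ a * z) : m' ∣ z := by
  have hd0 : gcd a m ≠ 0 := by
    rintro h0; apply hm; rw [← hmm, h0, zero_mul]
  obtain ⟨a', ha'⟩ := gcd_dvd_left a m
  have h1 : m' ∣ a' * z := by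
    rcases h with ⟨k, hk⟩
    refine (mul_dvd_mul_iff_left hd0).mp ⟨k, ?_⟩
    calc gcd a m * (a' * z) = a * z := by rw [← mul_assoc, ← ha']
    _ = m * k := hk
    _ = gcd a m * m' * k := by rw [hmm]
  have hcop : IsCoprime m' a' := by
    rw [← isRelPrime_iff_isCoprime]
    intro c hcm' hca'
    have h2 : gcd a m * c ∣ gcd a m * 1 := by
      rw [mul_one]
      apply dvd_gcd
      · calc gcd a m * c ∣ gcd a m * a' := mul_dvd_mul_left _ hca'
        _ = a := ha'.symm
      · calc gcd a m * c ∣ gcd a m * m' := mul_dvd_mul_left _ hcm'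
        _ = m := hmm
    exact isUnit_of_dvd_one ((mul_dvd_mul_iff_left hd0).mp h2)
  exact hcop.dvd_of_dvd_mul_left h1

lemma isUnit_mk_of_gcd (m w : R) (h : IsUnit (gcd w m)) :
    IsUnit (Ideal.Quotient.mk (Ideal.span {m}) w) := by
  have h1 : gcd w m ∣ 1 := h.dvd
  obtain ⟨u, v, huv⟩ := (gcd_dvd_iff_exists w m).mp h1
  refine IsUnit.of_mul_eq_one (Ideal.Quotient.mk _ u) ?_
  rw [← _root_.map_mul, ← map_one (Ideal.Quotient.mk (Ideal.span {m})), Ideal.Quotient.eq,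
    Ideal.mem_span_singleton]
  exact ⟨-v, by linear_combination -huv⟩

/-- Mutually dividing elements of `R/mR` differ by a unit factor. -/
lemma exists_unit_eq_of_dvd_dvd (hsr : HasStableRange15 R) (m : R) (hm0 : m ≠ 0)
    (x y : R ⧸ Ideal.span {m}) (hxy : x ∣ y) (hyx : y ∣ x) :
    ∃ e : (R ⧸ Ideal.span {m})ˣ, y = x * e := by
  obtain ⟨c, hc⟩ := hxy
  obtain ⟨c', hc'⟩ := hyx
  obtain ⟨a, ha⟩ := Ideal.Quotient.mk_surjective x
  obtain ⟨w, hw⟩ := Ideal.Quotient.mk_surjective c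
  obtain ⟨w', hw'⟩ := Ideal.Quotient.mk_surjective c'
  obtain ⟨m', hm'⟩ := gcd_dvd_right a m
  obtain ⟨a0, ha0⟩ := gcd_dvd_left a m
  have hxm' : x * Ideal.Quotient.mk (Ideal.span {m}) m' = 0 := by
    rw [← ha, ← _root_.map_mul, Ideal.Quotient.eq_zero_iff_mem, Ideal.mem_span_singleton]
    exact ⟨a0, by linear_combination m' * ha0 - a0 * hm'⟩
  have hkill : m ∣ a * (1 - w * w') := by
    rw [← Ideal.mem_span_singleton, ← Ideal.Quotient.eq_zero_iff_mem]
    have : (Ideal.Quotient.mk (Ideal.span {m})) (a * (1 - w * w')) =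
        x - x * c * c' := by
      rw [_root_.map_mul, _root_.map_sub, _root_.map_one, _root_.map_mul, ha, hw, hw']
      ring
    rw [this, ← hc, ← hc', sub_self]
  have hsub : m' ∣ 1 - w * w' := dvd_of_gcd_mul m a m' _ hm0 hm'.symm hkill
  obtain ⟨r, hr⟩ := hsr w m' m hm0 (by
    intro e hew hem'
    intro _
    refine isUnit_of_dvd_one ?_
    have h1 : e ∣ w * w' := hew.mul_right _
    have h2 : e ∣ 1 - w * w' := hem'.trans hsub
    simpa using h1.add h2)
  have hu : IsUnit ((Ideal.Quotient.mk (Ideal.span {m})) (w + m' * r)) := by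
    apply isUnit_mk_of_gcd
    exact hr _ (gcd_dvd_left _ _) (gcd_dvd_right _ _)
  obtain ⟨u, hu⟩ := hu
  refine ⟨u, ?_⟩
  have hval : (u : R ⧸ Ideal.span {m}) =
      c + Ideal.Quotient.mk (Ideal.span {m}) m' * Ideal.Quotient.mk (Ideal.span {m}) r := by
    rw [hu, map_add, _root_.map_mul, hw]
  calc y = x * c := hc
  _ = x * c + x * (Ideal.Quotient.mk (Ideal.span {m}) m' *
        Ideal.Quotient.mk (Ideal.span {m}) r) := by
      rw [← mul_assoc, hxm', zero_mul, add_zero]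
  _ = x * ↑u := by rw [hval]; ring
end Aux

/-- The product of generating solutions of `φ₂ = φ₁ * x` and `φ₃ = φ₂ * x` is a
generating solution of `φ₃ = φ₁ * x`; in particular it differs from any generating
solution of `φ₃ = φ₁ * x` by a unit factor. -/
theorem mul_generating_solutions
    {R : Type*} [CommRing R] [IsDomain R] [IsBezout R]
    (hsr : HasStableRange15 R)
    (m : R) (hm0 : m ≠ 0) (hmu : ¬ IsUnit m)
    (φ₁ φ₂ φ₃ : R ⧸ Ideal.span {m})
    (h12 : φ₁ ∣ φ₂) (h23 : φ₂ ∣ φ₃) (h3 : φ₃ ≠ 0)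
    (ψ₂₁ : R ⧸ Ideal.span {m}) (hψ₂₁ : φ₂ = φ₁ * ψ₂₁)
    (hψ₂₁gen : ∀ x : R ⧸ Ideal.span {m}, φ₂ = φ₁ * x → ψ₂₁ ∣ x)
    (ψ₃₂ : R ⧸ Ideal.span {m}) (hψ₃₂ : φ₃ = φ₂ * ψ₃₂)
    (hψ₃₂gen : ∀ x : R ⧸ Ideal.span {m}, φ₃ = φ₂ * x → ψ₃₂ ∣ x) :
    (φ₃ = φ₁ * (ψ₂₁ * ψ₃₂) ∧
      ∀ x : R ⧸ Ideal.span {m}, φ₃ = φ₁ * x → ψ₂₁ * ψ₃₂ ∣ x) ∧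
    ∀ ψ₃₁ : R ⧸ Ideal.span {m},
      φ₃ = φ₁ * ψ₃₁ → (∀ x : R ⧸ Ideal.span {m}, φ₃ = φ₁ * x → ψ₃₁ ∣ x) →
      ∃ e : (R ⧸ Ideal.span {m})ˣ, ψ₂₁ * ψ₃₂ = ψ₃₁ * e := by
  classical
  letI : GCDMonoid R := IsBezout.toGCDDomain R
  set Q := Ideal.Quotient.mk (Ideal.span {m}) with hQdef
  obtain ⟨a, ha⟩ := Ideal.Quotient.mk_surjective φ₁
  obtain ⟨s, hs⟩ := Ideal.Quotient.mk_surjective ψ₂₁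
  obtain ⟨t, ht⟩ := Ideal.Quotient.mk_surjective ψ₃₂
  obtain ⟨m1, hm1⟩ := gcd_dvd_right a m
  obtain ⟨m2, hm2⟩ := gcd_dvd_right (a * s) m
  obtain ⟨a0, ha0⟩ := gcd_dvd_left a m
  obtain ⟨b0, hb0⟩ := gcd_dvd_left (a * s) m
  have hd1 : gcd a m ≠ 0 := by
    rintro h0; apply hm0; rw [hm1, h0, zero_mul]
  have hφ₂ : φ₂ = Q (a * s) := by rw [hψ₂₁, _root_.map_mul, ha, hs]
  -- annihilation facts
  have hann1 : φ₁ * Q m1 = 0 := by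
    rw [← ha, ← _root_.map_mul, Ideal.Quotient.eq_zero_iff_mem,
      Ideal.mem_span_singleton]
    exact ⟨a0, by linear_combination m1 * ha0 - a0 * hm1⟩
  have hann2 : φ₂ * Q m2 = 0 := by
    rw [hφ₂, ← _root_.map_mul, Ideal.Quotient.eq_zero_iff_mem,
      Ideal.mem_span_singleton]
    exact ⟨b0, by linear_combination m2 * hb0 - b0 * hm2⟩
  -- generating consequences
  have hg1 : gcd s m ∣ m1 := by
    rw [← mk_dvd_mk_iff, hs]
    have := hψ₂₁gen (ψ₂₁ + Q m1) (by rw [mul_add, ← hψ₂₁, hann1, add_zero])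
    exact (dvd_add_right dvd_rfl).mp this
  have hg2 : gcd t m ∣ m2 := by
    rw [← mk_dvd_mk_iff, ht]
    have := hψ₃₂gen (ψ₃₂ + Q m2) (by rw [mul_add, ← hψ₃₂, hann2, add_zero])
    exact (dvd_add_right dvd_rfl).mp this
  -- key divisibility
  have key : gcd (s * t) m ∣ m1 := by
    have h1 : gcd (s * t) m ∣ gcd m s * gcd m t :=
      dvd_trans (dvd_gcd (gcd_dvd_right _ _) (gcd_dvd_left _ _)) (gcd_mul_dvd_mul_gcd m s t)
    have h2 : gcd m s * gcd m t ∣ gcd s m * gcd t m :=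
      mul_dvd_mul (dvd_gcd (gcd_dvd_right _ _) (gcd_dvd_left _ _))
        (dvd_gcd (gcd_dvd_right _ _) (gcd_dvd_left _ _))
    have hA : gcd a m * gcd s m ∣ gcd (a * s) m :=
      dvd_gcd (mul_dvd_mul (gcd_dvd_left a m) (gcd_dvd_left s m))
        (dvd_trans (mul_dvd_mul_left (gcd a m) hg1) (dvd_of_eq hm1.symm))
    have hB : gcd a m * (gcd s m * gcd t m) ∣ gcd a m * m1 := by
      rw [← hm1]
      calc gcd a m * (gcd s m * gcd t m) = gcd a m * gcd s m * gcd t m := by ring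
      _ ∣ gcd (a * s) m * gcd t m := mul_dvd_mul_right hA _
      _ ∣ gcd (a * s) m * m2 := mul_dvd_mul_left _ hg2
      _ = m := hm2.symm
    exact ((h1.trans h2).trans ((mul_dvd_mul_iff_left hd1).mp hB))
  -- part 1
  have p1 : φ₃ = φ₁ * (ψ₂₁ * ψ₃₂) := by rw [hψ₃₂, hψ₂₁]; ring
  have p2 : ∀ x : R ⧸ Ideal.span {m}, φ₃ = φ₁ * x → ψ₂₁ * ψ₃₂ ∣ x := by
    intro x hx
    obtain ⟨x0, hx0⟩ := Ideal.Quotient.mk_surjective x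
    have hz : m ∣ a * (x0 - s * t) := by
      rw [← Ideal.mem_span_singleton, ← Ideal.Quotient.eq_zero_iff_mem]
      have : (Ideal.Quotient.mk (Ideal.span {m})) (a * (x0 - s * t)) =
          φ₁ * x - φ₁ * (ψ₂₁ * ψ₃₂) := by
        rw [_root_.map_mul, _root_.map_sub, _root_.map_mul, ha, hs, ht, hx0]
        ring
      rw [this, ← hx, ← p1, sub_self]
    have hdvd : m1 ∣ x0 - s * t := dvd_of_gcd_mul m a m1 _ hm0 hm1.symm hz
    have hst1 : Q (s * t) ∣ Q m1 := (mk_dvd_mk_iff m (s * t) m1).mpr key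
    have hst2 : Q m1 ∣ Q (x0 - s * t) := map_dvd Q hdvd
    have : ψ₂₁ * ψ₃₂ = Q (s * t) := by rw [_root_.map_mul, hs, ht]
    rw [this, ← hx0, show x0 = s * t + (x0 - s * t) by ring, map_add]
    exact dvd_add dvd_rfl (hst1.trans hst2)
  refine ⟨⟨p1, p2⟩, ?_⟩
  intro ψ₃₁ hsol hgen
  exact exists_unit_eq_of_dvd_dvd hsr m hm0 ψ₃₁ (ψ₂₁ * ψ₃₂) (hgen _ p1) (p2 _ hsol)
end

section
/- Let R be a commutative Bézout domain of stable range 1.5, m ∈ R neither zero nor a unit, and R_m = R/mR. Let φ₁, φ₂, …, φ_n ∈ R_m with φ₁ ∣ φ₂ ∣ ⋯ ∣ φ_n and φ_n ≠ 0. Then there exist elements ψ_{ij} ∈ R_m for 1 ≤ j < i ≤ n, each ψ_{ij} being a generating solution of the equation φ_i = φ_j·x, such that ψ_{i,i−1}·ψ_{i+1,i} = ψ_{i+1,i−1} for all i with 2 ≤ i ≤ n−1. -/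
section Aux

variable {R : Type*} [CommRing R] [IsDomain R] [IsBezout R]

/-- A "normal form" solution: `w = g * c` with `m = g * M`, `g * d ∣ m` and `c` coprime to `M`. -/
def GoodSol (m d w : R) : Prop :=
  ∃ g c M : R, w = g * c ∧ m = g * M ∧ g * d ∣ m ∧ IsCoprime c M

lemma mk_eq_mk_iff_dvd {m x y : R} :
    Ideal.Quotient.mk (Ideal.span {m}) x = Ideal.Quotient.mk (Ideal.span {m}) y ↔ m ∣ x - y := by
  rw [Ideal.Quotient.mk_eq_mk_iff_sub_mem, Ideal.mem_span_singleton]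

/-- A normal solution is a generating solution. -/
lemma GoodSol.gen {m d a w : R} (hm : m ≠ 0) (hda : d ∣ a) (hdm : d ∣ m)
    (hdg : ∀ e : R, e ∣ a → e ∣ m → e ∣ d) (hw : GoodSol m d w) (x : R)
    (hx : Ideal.Quotient.mk (Ideal.span {m}) (a * w) = Ideal.Quotient.mk (Ideal.span {m}) (a * x)) :
    Ideal.Quotient.mk (Ideal.span {m}) w ∣ Ideal.Quotient.mk (Ideal.span {m}) x := by
  obtain ⟨g, c, M, hwgc, hM, hgd, hcop⟩ := hw
  have hd0 : d ≠ 0 := by rintro rfl; exact hm (zero_dvd_iff.mp hdm)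
  obtain ⟨a', ha'⟩ := hda
  obtain ⟨m₁, hm₁⟩ := hdm
  -- m₁ ∣ w - x
  have h1 : m ∣ a * w - a * x := mk_eq_mk_iff_dvd.mp hx
  have h2 : m₁ ∣ a' * (w - x) := by
    have h1' : d * m₁ ∣ d * (a' * (w - x)) := by
      rw [← hm₁, show d * (a' * (w - x)) = a * w - a * x from by rw [ha']; ring]
      exact h1
    exact (mul_dvd_mul_iff_left hd0).mp h1' 
  have hcop' : IsCoprime m₁ a' := by
    apply IsRelPrime.isCoprime
    intro t ht1 ht2
    have h3 : d * t ∣ a := ha' ▸ mul_dvd_mul_left d ht2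
    have h4 : d * t ∣ m := hm₁ ▸ mul_dvd_mul_left d ht1
    have h5 : d * t ∣ d * 1 := by simpa using hdg _ h3 h4
    exact isUnit_of_dvd_one ((mul_dvd_mul_iff_left hd0).mp h5)
  have h6 : m₁ ∣ w - x := hcop'.dvd_of_dvd_mul_left h2
  -- g ∣ m₁
  have hg0 : g ≠ 0 := by rintro rfl; rw [zero_mul] at hM; exact hm hM
  have hgm₁ : g ∣ m₁ := by
    have h1' : d * g ∣ d * m₁ := by rw [← hm₁, mul_comm d g]; exact hgd
    exact (mul_dvd_mul_iff_left hd0).mp h1' 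
  obtain ⟨e, he⟩ := hgm₁
  obtain ⟨t, ht⟩ := h6
  obtain ⟨u, v, huv⟩ := hcop
  refine ⟨Ideal.Quotient.mk _ ((c - e * t) * u), ?_⟩
  rw [← map_mul, mk_eq_mk_iff_dvd]
  refine ⟨(c - e * t) * v, ?_⟩
  have hx' : x = g * c - g * e * t := by
    have : w - x = g * e * t := by rw [ht, he]
    rw [hwgc] at this; linear_combination -this
  rw [hx', hwgc, hM]
  linear_combination (-g * (c - e * t)) * huv

/-- Existence of a normal solution, from stable range 1.5. -/
lemma goodSol_exists (hsr : HasStableRange15 R) {m : R} (hm : m ≠ 0) {d a b x₀ : R}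
    (hda : d ∣ a) (hdm : d ∣ m)
    (hx : Ideal.Quotient.mk (Ideal.span {m}) b
        = Ideal.Quotient.mk (Ideal.span {m}) a * Ideal.Quotient.mk (Ideal.span {m}) x₀) :
    ∃ w : R, (Ideal.Quotient.mk (Ideal.span {m}) b
        = Ideal.Quotient.mk (Ideal.span {m}) a * Ideal.Quotient.mk (Ideal.span {m}) w)
      ∧ GoodSol m d w := by
  have hd0 : d ≠ 0 := by rintro rfl; exact hm (zero_dvd_iff.mp hdm)
  obtain ⟨a', ha'⟩ := hda
  obtain ⟨m₁, hm₁⟩ := hdm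
  have hm₁0 : m₁ ≠ 0 := by rintro rfl; rw [mul_zero] at hm₁; exact hm hm₁
  set g := IsBezout.gcd x₀ m₁ with hg
  obtain ⟨c₀, hc₀⟩ := IsBezout.gcd_dvd_left x₀ m₁
  obtain ⟨M₁, hM₁⟩ := IsBezout.gcd_dvd_right x₀ m₁
  have hg0 : g ≠ 0 := by
    rintro h; rw [← hg, h, zero_mul] at hM₁; exact hm₁0 hM₁
  have hM₁0 : M₁ ≠ 0 := by rintro rfl; rw [mul_zero] at hM₁; exact hm₁0 hM₁
  obtain ⟨r, hr⟩ := hsr c₀ M₁ (d * M₁) (mul_ne_zero hd0 hM₁0) (by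
    intro t h1 h2 _
    have h3 : g * t ∣ x₀ := hc₀ ▸ mul_dvd_mul_left g h1
    have h4 : g * t ∣ m₁ := hM₁ ▸ mul_dvd_mul_left g h2
    have h5 : g * t ∣ g * 1 := by simpa using IsBezout.dvd_gcd h3 h4
    exact isUnit_of_dvd_one ((mul_dvd_mul_iff_left hg0).mp h5))
  refine ⟨x₀ + m₁ * r, ?_, ?_⟩
  · have h0 : Ideal.Quotient.mk (Ideal.span {m}) (a * (m₁ * r)) = 0 := by
      rw [Ideal.Quotient.eq_zero_iff_dvd]
      exact ⟨a' * r, by rw [ha', hm₁]; ring⟩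
    have : (Ideal.Quotient.mk (Ideal.span {m})) (a * (x₀ + m₁ * r))
        = Ideal.Quotient.mk (Ideal.span {m}) (a * x₀) := by
      have hsplit : a * (x₀ + m₁ * r) = a * x₀ + a * (m₁ * r) := by ring
      rw [hsplit, map_add, h0, add_zero]
    rw [← map_mul, this, map_mul, ← hx]
  · refine ⟨g, c₀ + M₁ * r, d * M₁, by linear_combination hc₀ + r * hM₁,
      by linear_combination hm₁ + d * hM₁, ⟨M₁, by linear_combination hm₁ + d * hM₁⟩, ?_⟩
    exact IsRelPrime.isCoprime (fun t h1 h2 => hr t h1 h2)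

/-- Normal solutions compose. -/
lemma GoodSol.comp {m d₁ d₂ a w w' : R} (hm : m ≠ 0) (hd₁a : d₁ ∣ a)
    (hd₂ : ∀ e : R, e ∣ a * w → e ∣ m → e ∣ d₂)
    (h1 : GoodSol m d₁ w) (h2 : GoodSol m d₂ w') : GoodSol m d₁ (w * w') := by
  obtain ⟨g₂, c₂, M₂, hw2, hM₂, hg₂d, hc₂⟩ := h1
  obtain ⟨g₃, c₃, M₃, hw3, hM₃, hg₃d, hc₃⟩ := h2
  have hg₂0 : g₂ ≠ 0 := by rintro rfl; rw [zero_mul] at hM₂; exact hm hM₂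
  have hg₃0 : g₃ ≠ 0 := by rintro rfl; rw [zero_mul] at hM₃; exact hm hM₃
  obtain ⟨a'', ha''⟩ := hd₁a
  have hstep : g₂ * d₁ ∣ d₂ :=
    hd₂ _ ⟨a'' * c₂, by rw [hw2, ha'']; ring⟩ hg₂d
  have h3 : (g₂ * g₃) * d₁ ∣ m := by
    refine dvd_trans ?_ hg₃d
    obtain ⟨q, hq⟩ := hstep
    exact ⟨q, by rw [hq]; ring⟩
  obtain ⟨M, hM⟩ : (g₂ * g₃) ∣ m := dvd_trans (dvd_mul_right _ d₁) h3
  have hM₂' : M₂ = g₃ * M := mul_left_cancel₀ hg₂0 (by rw [← hM₂, hM]; ring)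
  have hM₃' : M₃ = g₂ * M := mul_left_cancel₀ hg₃0 (by rw [← hM₃, hM]; ring)
  exact ⟨g₂ * g₃, c₂ * c₃, M, by rw [hw2, hw3]; ring, hM, h3,
    IsCoprime.mul_left (hc₂.of_isCoprime_of_dvd_right ⟨g₃, by rw [hM₂']; ring⟩)
      (hc₃.of_isCoprime_of_dvd_right ⟨g₂, by rw [hM₃']; ring⟩)⟩

end Aux

/-- For a divisibility chain `φ₁ ∣ φ₂ ∣ ⋯ ∣ φ_n ≠ 0` in `R/mR`, there is a choice of
generating solutions `ψ i j` of the equations `φ_i = φ_j * x` (for `1 ≤ j < i ≤ n`)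
satisfying `ψ i (i-1) * ψ (i+1) i = ψ (i+1) (i-1)` for `2 ≤ i ≤ n - 1`. -/
theorem exists_compatible_generating_solutions
    {R : Type*} [CommRing R] [IsDomain R] [IsBezout R]
    (hsr : HasStableRange15 R)
    (m : R) (hm0 : m ≠ 0) (hmu : ¬ IsUnit m)
    (n : ℕ) (φ : ℕ → R ⧸ Ideal.span {m})
    (hchain : ∀ i : ℕ, 1 ≤ i → i < n → φ i ∣ φ (i + 1))
    (hφn : φ n ≠ 0) :
    ∃ ψ : ℕ → ℕ → R ⧸ Ideal.span {m},
      (∀ i j : ℕ, 1 ≤ j → j < i → i ≤ n →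
        φ i = φ j * ψ i j ∧
        ∀ x : R ⧸ Ideal.span {m}, φ i = φ j * x → ψ i j ∣ x) ∧
      (∀ i : ℕ, 2 ≤ i → i ≤ n - 1 →
        ψ i (i - 1) * ψ (i + 1) i = ψ (i + 1) (i - 1)) := by
  classical
  set π := Ideal.Quotient.mk (Ideal.span {m}) with hπ
  choose a ha using fun i => Ideal.Quotient.mk_surjective (I := Ideal.span {m}) (φ i)
  have hWex : ∀ i : ℕ, 1 ≤ i → i < n → ∃ v : R,
      (π (a (i+1)) = π (a i) * π v) ∧ GoodSol m (IsBezout.gcd (a i) m) v := by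
    intro i h1 h2
    obtain ⟨xb, hxb⟩ := hchain i h1 h2
    obtain ⟨x, hx⟩ := Ideal.Quotient.mk_surjective (I := Ideal.span {m}) xb
    refine goodSol_exists hsr hm0 (IsBezout.gcd_dvd_left (a i) m)
      (IsBezout.gcd_dvd_right (a i) m) (b := a (i+1)) (x₀ := x) ?_
    show π (a (i+1)) = π (a i) * π x
    rw [ha, ha, hx]
    exact hxb
  choose! w hw1 hw2 using hWex
  set W : ℕ → ℕ → R := fun i j => (Finset.range (i - j)).prod (fun k => w (j + k)) with hWdef
  have key : ∀ k j : ℕ, 1 ≤ j → j + k ≤ n →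
      (π (a (j+k)) = π (a j) * π (W (j+k) j)) ∧ GoodSol m (IsBezout.gcd (a j) m) (W (j+k) j) := by
    intro k
    induction k with
    | zero =>
      intro j hj hjn
      have hW1 : W j j = 1 := by rw [hWdef]; simp
      constructor
      · simp [hW1]
      · exact ⟨1, 1, m, by simp [hW1], by ring,
          by simpa using IsBezout.gcd_dvd_right (a j) m, isCoprime_one_left⟩
    | succ k ih =>
      intro j hj hjn
      have hi1 : 1 ≤ j + k := le_trans hj (Nat.le_add_right _ _)
      have hi2 : j + k < n := by omega
      obtain ⟨heq, hgood⟩ := ih j hj (by omega)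
      have hws := hw1 (j+k) hi1 hi2
      have hwg := hw2 (j+k) hi1 hi2
      have hWsucc : W (j+(k+1)) j = W (j+k) j * w (j+k) := by
        simp only [hWdef]
        rw [show j + (k+1) - j = k + 1 by omega, show j + k - j = k by omega,
          Finset.prod_range_succ]
      constructor
      · show π (a ((j+k)+1)) = π (a j) * π (W (j+(k+1)) j)
        rw [hws, heq, hWsucc, map_mul]
        ring
      · rw [hWsucc]
        refine GoodSol.comp (a := a j) hm0 (IsBezout.gcd_dvd_left (a j) m) ?_ hgood hwg
        intro e h1e h2e
        refine IsBezout.dvd_gcd ?_ h2e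
        have hdv : m ∣ a (j+k) - a j * W (j+k) j :=
          mk_eq_mk_iff_dvd.mp (by rw [heq, ← map_mul])
        obtain ⟨s, hs⟩ := hdv
        have hrepr : a (j+k) = a j * W (j+k) j + m * s := by linear_combination hs
        rw [hrepr]
        exact dvd_add h1e (Dvd.dvd.mul_right h2e s)
  refine ⟨fun i j => π (W i j), ?_, ?_⟩
  · intro i j hj hji hin
    have hkey := key (i - j) j hj (by omega)
    rw [show j + (i - j) = i by omega] at hkey
    obtain ⟨heq, hgood⟩ := hkey
    refine ⟨?_, ?_⟩
    · rw [← ha i, ← ha j]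
      exact heq
    · intro x hx
      obtain ⟨x', rfl⟩ := Ideal.Quotient.mk_surjective (I := Ideal.span {m}) x
      have h5 : π (a i) = π (a j) * π x' := by rw [ha i, ha j]; exact hx
      have heq2 : π (a j * W i j) = π (a j * x') := by
        rw [map_mul, map_mul, ← heq, h5]
      exact GoodSol.gen hm0 (IsBezout.gcd_dvd_left (a j) m) (IsBezout.gcd_dvd_right (a j) m)
        (fun e h1 h2 => IsBezout.dvd_gcd h1 h2) hgood x' heq2
  · intro i h2i hin
    have e1 : W i (i-1) = w (i-1) := by
      simp only [hWdef]
      rw [show i - (i-1) = 1 by omega, Finset.prod_range_one, Nat.add_zero]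
    have e2 : W (i+1) i = w i := by
      simp only [hWdef]
      rw [show i + 1 - i = 1 by omega, Finset.prod_range_one, Nat.add_zero]
    have e3 : W (i+1) (i-1) = w (i-1) * w i := by
      simp only [hWdef]
      rw [show i + 1 - (i-1) = 2 by omega, Finset.prod_range_succ, Finset.prod_range_one,
        Nat.add_zero, show i - 1 + 1 = i by omega]
    show π (W i (i-1)) * π (W (i+1) i) = π (W (i+1) (i-1))
    rw [e1, e2, e3, map_mul]
end

section
/- Let R be a commutative Bézout domain of stable range 1.5, m ∈ R neither zero nor a unit, and R_m = R/mR, with x̄ the image of x ∈ R in R_m. Let a, b ∈ R with b̄ ∣ ā in R_m. Let μ_a = gcd(a, m) and μ_b = gcd(b, m) in R, and let α_a, α_b ∈ R be the elements with m = μ_a·α_a and m = μ_b·α_b. Then for any generating solution ψ of the equation ā = b̄·x in R_m and any generating solution χ of the equation ᾱ_b = ᾱ_a·x in R_m, there exists a unit e of R_m such that ψ = χ·e. -/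
private theorem bezout_isCoprime {R : Type*} [CommRing R] [IsBezout R] {x y : R}
    (h : ∀ d : R, d ∣ x → d ∣ y → IsUnit d) : IsCoprime x y :=
  IsRelPrime.isCoprime (fun z hx hy => h z hx hy)

/-- If `b̄ ∣ ā` in `R/mR`, `μ_a = gcd(a, m)`, `μ_b = gcd(b, m)`, `m = μ_a * α_a`, and
`m = μ_b * α_b`, then every generating solution of `ā = b̄ * x` equals a generating
solution of `ᾱ_b = ᾱ_a * x` times a unit. -/
theorem generating_solution_eq_cogcd_generating_solution_mul_unit
    {R : Type*} [CommRing R] [IsDomain R] [IsBezout R]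
    (hsr : HasStableRange15 R)
    (m : R) (hm0 : m ≠ 0) (hmu : ¬ IsUnit m)
    (a b : R)
    (hdvd : Ideal.Quotient.mk (Ideal.span {m}) b ∣ Ideal.Quotient.mk (Ideal.span {m}) a)
    (μa : R) (hμa1 : μa ∣ a) (hμa2 : μa ∣ m) (hμa3 : ∀ x : R, x ∣ a → x ∣ m → x ∣ μa)
    (μb : R) (hμb1 : μb ∣ b) (hμb2 : μb ∣ m) (hμb3 : ∀ x : R, x ∣ b → x ∣ m → x ∣ μb)
    (αa : R) (hαa : m = μa * αa)
    (αb : R) (hαb : m = μb * αb)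
    (ψ : R ⧸ Ideal.span {m})
    (hψ : Ideal.Quotient.mk (Ideal.span {m}) a = Ideal.Quotient.mk (Ideal.span {m}) b * ψ)
    (hψgen : ∀ x : R ⧸ Ideal.span {m},
      Ideal.Quotient.mk (Ideal.span {m}) a = Ideal.Quotient.mk (Ideal.span {m}) b * x →
        ψ ∣ x)
    (χ : R ⧸ Ideal.span {m})
    (hχ : Ideal.Quotient.mk (Ideal.span {m}) αb = Ideal.Quotient.mk (Ideal.span {m}) αa * χ)
    (hχgen : ∀ x : R ⧸ Ideal.span {m},
      Ideal.Quotient.mk (Ideal.span {m}) αb = Ideal.Quotient.mk (Ideal.span {m}) αa * x →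
        χ ∣ x) :
    ∃ e : (R ⧸ Ideal.span {m})ˣ, ψ = χ * e := by
  let mk : R →+* R ⧸ Ideal.span {m} := Ideal.Quotient.mk (Ideal.span {m})
  have hmksur : Function.Surjective mk := Ideal.Quotient.mk_surjective
  have hsub : ∀ x y : R, mk x = mk y → ∃ w : R, x - y = m * w := by
    intro x y h
    have hx : x - y ∈ Ideal.span {m} := Ideal.Quotient.eq.mp h
    obtain ⟨c, hc⟩ := Ideal.mem_span_singleton'.mp hx
    exact ⟨c, by rw [← hc, mul_comm]⟩
  have hadd : ∀ x w : R, mk (x + m * w) = mk x := by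
    intro x w
    rw [Ideal.Quotient.eq]
    simpa using Ideal.mem_span_singleton'.mpr ⟨w, mul_comm w m⟩
  -- nonzero facts
  have hμa0 : μa ≠ 0 := fun h => hm0 (by rw [hαa, h, zero_mul])
  have hμb0 : μb ≠ 0 := fun h => hm0 (by rw [hαb, h, zero_mul])
  have hαa0 : αa ≠ 0 := fun h => hm0 (by rw [hαa, h, mul_zero])
  -- μb ∣ a, define δ with μa = μb * δ
  obtain ⟨c0, hc0⟩ := hdvd
  obtain ⟨c0', rfl⟩ := hmksur c0
  obtain ⟨s0, hs0⟩ := hsub a (b * c0') hc0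
  have hμba : μb ∣ a := by
    have ha0 : a = b * c0' + m * s0 := by linear_combination hs0
    rw [ha0]
    exact dvd_add (Dvd.dvd.mul_right hμb1 _) (Dvd.dvd.mul_right hμb2 _)
  obtain ⟨δ, hδ⟩ : μb ∣ μa := hμa3 μb hμba hμb2
  obtain ⟨a', ha'⟩ := hμa1
  obtain ⟨b', hb'⟩ := hμb1
  -- αb = δ * αa
  have hαbδ : αb = δ * αa := by
    apply mul_left_cancel₀ hμb0
    linear_combination hαa - hαb + αa * hδ
  -- lifts of ψ and χ
  obtain ⟨p, hp⟩ := hmksur ψ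
  obtain ⟨w, hw⟩ := hsub a (b * p) (by rw [hψ, ← hp]; rfl)
  obtain ⟨q, hq⟩ := hmksur χ
  obtain ⟨v, hv⟩ := hsub αb (αa * q) (by rw [hχ, ← hq]; rfl)
  -- q = δ * (1 - μb * v)
  have hqδ : q = δ * (1 - μb * v) := by
    apply mul_left_cancel₀ hαa0
    have h := hv
    rw [hαbδ, hαa, hδ] at h
    linear_combination -h
  -- b' * p = δ * (a' - αa * w)
  have hbp : b' * p = δ * (a' - αa * w) := by
    apply mul_left_cancel₀ hμb0
    have h := hw
    rw [ha', hb', hαb, hαbδ, hδ] at h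
    linear_combination -h
  -- coprimality: any common divisor of b' and αb is a unit
  have hcop_b'_αb : ∀ d : R, d ∣ b' → d ∣ αb → IsUnit d := by
    intro d hd1 hd2
    have h1 : μb * d ∣ b := by rw [hb']; exact mul_dvd_mul_left μb hd1
    have h2 : μb * d ∣ m := by rw [hαb]; exact mul_dvd_mul_left μb hd2
    have h3 : μb * d ∣ μb * 1 := by rw [mul_one]; exact hμb3 _ h1 h2
    exact isUnit_of_dvd_one ((mul_dvd_mul_iff_left hμb0).mp h3)
  -- δ ∣ p
  have hδb' : IsCoprime δ b' := by
    apply bezout_isCoprime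
    intro d hd1 hd2
    exact hcop_b'_αb d hd2 (by rw [hαbδ]; exact Dvd.dvd.mul_right hd1 αa)
  have hδp : δ ∣ p := hδb'.dvd_of_dvd_mul_left ⟨a' - αa * w, hbp⟩
  -- construct a solution δ * y of the first equation with gcd(y, m) = 1
  have hb'αa : IsCoprime b' αa := by
    apply bezout_isCoprime
    intro d hd1 hd2
    exact hcop_b'_αb d hd1 (by rw [hαbδ]; exact Dvd.dvd.mul_left hd2 δ)
  obtain ⟨u, v', huv⟩ := hb'αa
  have hy0 : b' * (u * a') = a' - v' * a' * αa := by linear_combination a' * huv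
  obtain ⟨r, hr⟩ := hsr (u * a') αa m hm0 (by
    intro d hd1 hd2 hd3
    have hda' : d ∣ a' := by
      have h5 : d ∣ b' * (u * a') := Dvd.dvd.mul_left hd1 b'
      rw [hy0] at h5
      have h4 : d ∣ v' * a' * αa := Dvd.dvd.mul_left hd2 _
      have h6 := dvd_add h5 h4
      simpa using h6
    have h1 : μa * d ∣ a := by rw [ha']; exact mul_dvd_mul_left μa hda'
    have h2 : μa * d ∣ m := by rw [hαa]; exact mul_dvd_mul_left μa hd2
    have h3 : μa * d ∣ μa * 1 := by rw [mul_one]; exact hμa3 _ h1 h2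
    exact isUnit_of_dvd_one ((mul_dvd_mul_iff_left hμa0).mp h3))
  set y := u * a' + αa * r with hy
  have hym : IsCoprime y m := bezout_isCoprime (fun d hd1 hd2 => hr d hd1 hd2)
  -- δ * y is a solution of the first equation
  have hxsol : mk a = mk b * mk (δ * y) := by
    rw [← map_mul]
    have hid : b * (δ * y) = a + m * (b' * r - v' * a') := by
      rw [hb', ha', hαa, hδ, hy]
      linear_combination (μb * δ * a') * huv
    rw [hid, hadd]
  -- ψ divides mk δ
  obtain ⟨c1, hc1⟩ := hψgen (mk (δ * y)) hxsol
  obtain ⟨c1', rfl⟩ := hmksur c1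
  obtain ⟨v2, hv2⟩ := hsub (δ * y) (p * c1') (by rw [hc1, ← hp]; rfl)
  obtain ⟨s, t, hst⟩ := hym
  have hψδ : ψ ∣ mk δ := by
    refine ⟨mk (s * c1'), ?_⟩
    have hid : δ = p * (s * c1') + m * (s * v2 + δ * t) := by
      linear_combination s * hv2 - δ * hst
    calc mk δ = mk (p * (s * c1') + m * (s * v2 + δ * t)) := by rw [← hid]
      _ = mk (p * (s * c1')) := hadd _ _
      _ = ψ * mk (s * c1') := by rw [map_mul, hp]
  -- ψ ∣ χ
  have hδχ : mk δ ∣ χ := ⟨mk (1 - μb * v), by rw [← hq, hqδ, map_mul]⟩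
  have hψχ : ψ ∣ χ := dvd_trans hψδ hδχ
  -- χ ∣ ψ
  have hχδ : χ ∣ mk δ := hχgen (mk δ) (by
    rw [← map_mul]
    exact congrArg mk (by rw [hαbδ]; ring))
  obtain ⟨p1, hp1⟩ := hδp
  have hδψ : mk δ ∣ ψ := ⟨mk p1, by rw [← hp, hp1, map_mul]⟩
  have hχψ : χ ∣ ψ := dvd_trans hχδ hδψ
  -- mutual divisibility + stable range 1 of the quotient gives the unit
  obtain ⟨sb, hs⟩ := hχψ
  obtain ⟨S, rfl⟩ := hmksur sb
  obtain ⟨tb, ht⟩ := hψχ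
  obtain ⟨T, rfl⟩ := hmksur tb
  obtain ⟨r2, hr2⟩ := hsr S (1 - T * S) m hm0 (by
    intro d hd1 hd2 _
    have : d ∣ T * S := Dvd.dvd.mul_left hd1 T
    have h7 := dvd_add hd2 this
    exact isUnit_of_dvd_one (by simpa using h7))
  set E0 := S + (1 - T * S) * r2 with hE0
  have hcopE : IsCoprime E0 m := bezout_isCoprime (fun d hd1 hd2 => hr2 d hd1 hd2)
  obtain ⟨u2, v2', huv2⟩ := hcopE
  have hunit : mk u2 * mk E0 = 1 := by
    rw [← map_mul]
    calc mk (u2 * E0) = mk (1 + m * (-v2')) := congrArg mk (by linear_combination huv2)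
      _ = mk 1 := hadd _ _
      _ = 1 := map_one mk
  refine ⟨⟨mk E0, mk u2, by rw [mul_comm]; exact hunit, hunit⟩, ?_⟩
  show ψ = χ * mk E0
  have h1 : χ * (mk T * mk S) = χ := by linear_combination (-(mk T)) * hs - ht
  have hmkE0 : mk E0 = mk S + (1 - mk T * mk S) * mk r2 := by
    rw [hE0]; push_cast [map_add, map_mul, map_sub, map_one]; ring
  rw [hmkE0]
  linear_combination hs + (mk r2) * h1
end

section
/- Let R be a commutative Bézout domain of stable range 1.5, m ∈ R neither zero nor a unit, and R_m = R/mR. Let φ₁, φ₂, …, φ_n ∈ R_m with φ₁ ∣ φ₂ ∣ ⋯ ∣ φ_n and φ_n ≠ 0. Then there exist elements ψ_{ij} ∈ R_m for 1 ≤ j < i ≤ n, each ψ_{ij} being a generating solution of the equation φ_i = φ_j·x, such that for every permutation σ of {1, 2, …, n}: the product over all i with σ(i) < i of ψ_{i,σ(i)} equals the product over all i with σ(i) > i of ψ_{σ(i),i}. -/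
open Finset

section Aux

variable {R : Type*} [CommRing R] [IsDomain R] [IsBezout R]

local notation "π" m => Ideal.Quotient.mk (Ideal.span {m})

omit [IsDomain R] in
lemma aux_quot_dvd_iff (m u w : R) :
    ((π m) u ∣ (π m) w) ↔ IsBezout.gcd u m ∣ w := by
  constructor
  · rintro ⟨y, hy⟩
    obtain ⟨z, rfl⟩ := Ideal.Quotient.mk_surjective y
    rw [← _root_.map_mul, Ideal.Quotient.eq, Ideal.mem_span_singleton] at hy
    obtain ⟨t, ht⟩ := hy
    have hw : w = u * z + m * t := by linear_combination ht
    rw [hw]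
    exact dvd_add (Dvd.dvd.mul_right (IsBezout.gcd_dvd_left u m) z)
      (Dvd.dvd.mul_right (IsBezout.gcd_dvd_right u m) t)
  · intro h
    have hw : w ∈ Ideal.span {u, m} := by
      rw [← IsBezout.span_gcd, Ideal.mem_span_singleton]
      exact h
    obtain ⟨α, β, hab⟩ := Ideal.mem_span_pair.mp hw
    refine ⟨(π m) α, ?_⟩
    have h0 : (π m) m = 0 := by
      rw [Ideal.Quotient.eq_zero_iff_mem]; exact Ideal.subset_span rfl
    calc (π m) w = (π m) (α * u + β * m) := by rw [hab]
    _ = (π m) u * (π m) α + (π m) β * (π m) m := by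
        rw [map_add, _root_.map_mul, _root_.map_mul]; ring
    _ = (π m) u * (π m) α := by rw [h0, mul_zero, add_zero]

omit [IsDomain R] in
lemma aux_gcd_ne_zero (m a : R) (hm0 : m ≠ 0) : IsBezout.gcd a m ≠ 0 := by
  intro h
  have := IsBezout.gcd_dvd_right a m
  rw [h] at this
  exact hm0 (zero_dvd_iff.mp this)

lemma aux_coprime_of_gcd (m a : R) (hd : IsBezout.gcd a m ≠ 0) (a₁ m₁ : R)
    (ha₁ : a = IsBezout.gcd a m * a₁) (hm₁ : m = IsBezout.gcd a m * m₁) :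
    IsCoprime a₁ m₁ := by
  obtain ⟨α, β, hab⟩ := IsBezout.gcd_eq_sum a m
  refine ⟨α, β, ?_⟩
  apply mul_left_cancel₀ hd
  linear_combination hab - α * ha₁ - β * hm₁

/-- The canonical element divides every solution. -/
lemma aux_canonical_dvd_solution (m : R) (hm0 : m ≠ 0) (a b x δ : R)
    (hx : (π m) b = (π m) a * (π m) x)
    (hδ : IsBezout.gcd a m * δ = IsBezout.gcd b m) : δ ∣ x := by
  have hd0 : IsBezout.gcd a m ≠ 0 := aux_gcd_ne_zero m a hm0
  obtain ⟨a₁, ha₁⟩ := IsBezout.gcd_dvd_left a m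
  obtain ⟨m₁, hm₁⟩ := IsBezout.gcd_dvd_right a m
  have hcop : IsCoprime a₁ m₁ := aux_coprime_of_gcd m a hd0 a₁ m₁ ha₁ hm₁
  rw [← _root_.map_mul, Ideal.Quotient.eq, Ideal.mem_span_singleton] at hx
  obtain ⟨t, ht⟩ := hx
  have hb : b = IsBezout.gcd a m * (a₁ * x + m₁ * t) := by
    linear_combination ht + x * ha₁ + t * hm₁
  have hδb : δ ∣ a₁ * x + m₁ * t := by
    have : IsBezout.gcd a m * δ ∣ IsBezout.gcd a m * (a₁ * x + m₁ * t) := by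
      rw [← hb, hδ]; exact IsBezout.gcd_dvd_left b m
    exact (mul_dvd_mul_iff_left hd0).mp this
  have hδm : δ ∣ m₁ := by
    have : IsBezout.gcd a m * δ ∣ IsBezout.gcd a m * m₁ := by
      rw [hδ, ← hm₁]; exact IsBezout.gcd_dvd_right b m
    exact (mul_dvd_mul_iff_left hd0).mp this
  have hδax : δ ∣ a₁ * x := by
    have h2 : a₁ * x = (a₁ * x + m₁ * t) - m₁ * t := by ring
    rw [h2]
    exact dvd_sub hδb (hδm.mul_right t)
  exact ((hcop.of_isCoprime_of_dvd_right hδm).symm).dvd_of_dvd_mul_left hδax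

/-- Step lemma: existence of a generating solution with canonical gcd factor. -/
lemma aux_step_lemma (hsr : HasStableRange15 R) (m : R) (hm0 : m ≠ 0) (a b : R)
    (hab : (π m) a ∣ (π m) b) :
    ∃ ψ gen : R, ((π m) b = (π m) a * (π m) ψ) ∧ ((π m) ψ ∣ (π m) gen) ∧
      IsBezout.gcd a m * gen = IsBezout.gcd b m := by
  set d := IsBezout.gcd a m with hd
  have hd0 : d ≠ 0 := aux_gcd_ne_zero m a hm0
  obtain ⟨a₁, ha₁⟩ : ∃ a₁, a = d * a₁ := IsBezout.gcd_dvd_left a m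
  obtain ⟨m₁, hm₁⟩ : ∃ m₁, m = d * m₁ := IsBezout.gcd_dvd_right a m
  have hm₁0 : m₁ ≠ 0 := fun h => hm0 (by rw [hm₁, h, mul_zero])
  obtain ⟨u, v, huv⟩ : IsCoprime a₁ m₁ := aux_coprime_of_gcd m a hd0 a₁ m₁ ha₁ hm₁
  obtain ⟨b₁, hb₁⟩ : ∃ b₁, b = d * b₁ := (aux_quot_dvd_iff m a b).mp hab
  set x₀ := u * b₁ with hx₀
  set G := IsBezout.gcd x₀ m₁ with hG
  have hG0 : G ≠ 0 := aux_gcd_ne_zero m₁ x₀ hm₁0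
  obtain ⟨x₂, hx₂⟩ : ∃ x₂, x₀ = G * x₂ := IsBezout.gcd_dvd_left x₀ m₁
  obtain ⟨m₂, hm₂⟩ : ∃ m₂, m₁ = G * m₂ := IsBezout.gcd_dvd_right x₀ m₁
  obtain ⟨r, hr⟩ := hsr x₂ m₂ m hm0 (fun e he1 he2 _ => by
    have h1 : G * e ∣ x₀ := by rw [hx₂]; exact mul_dvd_mul_left G he1
    have h2 : G * e ∣ m₁ := by rw [hm₂]; exact mul_dvd_mul_left G he2
    have h3 : G * e ∣ G * 1 := by rw [mul_one, hG]; exact IsBezout.dvd_gcd h1 h2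
    exact isUnit_of_dvd_one ((mul_dvd_mul_iff_left hG0).mp h3))
  set w := x₂ + m₂ * r with hw
  set ψ := G * w with hψ
  have hψeq : ψ = x₀ + m₁ * r := by linear_combination hψ + G * hw - hx₂ - r * hm₂
  have hwm : IsCoprime w m := isRelPrime_iff_isCoprime.mp (fun e he hem => hr e he hem)
  have hbax : b - a * x₀ = (b₁ * v) * m := by
    linear_combination hb₁ - x₀ * ha₁ - d * a₁ * hx₀ - b₁ * v * hm₁ - d * b₁ * huv
  have hsol : (π m) b = (π m) a * (π m) ψ := by
    rw [← _root_.map_mul, Ideal.Quotient.eq, Ideal.mem_span_singleton]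
    exact ⟨b₁ * v - a₁ * r, by linear_combination hbax - a * hψeq + r * a₁ * hm₁ - r * m₁ * ha₁⟩
  obtain ⟨gen, hgen⟩ : ∃ gen, IsBezout.gcd b m = d * gen := by
    rw [hd]; exact IsBezout.dvd_gcd ⟨b₁, hb₁⟩ ⟨m₁, hm₁⟩
  refine ⟨ψ, gen, hsol, ?_, hgen.symm⟩
  have hgen'gen : G ∣ gen := by
    have h1 : d * G ∣ d * gen := by
      rw [← hgen]
      refine IsBezout.dvd_gcd ?_ ?_
      · have hb' : b = a * x₀ + b₁ * v * m := by linear_combination hbax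
        rw [hb']
        exact dvd_add ⟨a₁ * x₂, by linear_combination x₀ * ha₁ + d * a₁ * hx₂⟩
          ⟨b₁ * v * m₂, by linear_combination b₁ * v * hm₁ + b₁ * v * d * hm₂⟩
      · exact ⟨m₂, by linear_combination hm₁ + d * hm₂⟩
    exact (mul_dvd_mul_iff_left hd0).mp h1
  rw [aux_quot_dvd_iff]
  refine dvd_trans ?_ hgen'gen
  have he1 : IsBezout.gcd ψ m ∣ ψ := IsBezout.gcd_dvd_left ψ m
  have he2 : IsBezout.gcd ψ m ∣ m := IsBezout.gcd_dvd_right ψ m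
  have hcop : IsCoprime (IsBezout.gcd ψ m) w := hwm.symm.of_isCoprime_of_dvd_left he2
  have he1' : IsBezout.gcd ψ m ∣ G * w := by rw [← hψ]; exact he1
  exact hcop.dvd_of_dvd_mul_right he1'

end Aux

section Counting

lemma aux_card_cross {n : ℕ} (σ : Equiv.Perm (Fin n)) (k : ℕ) :
    (Finset.univ.filter fun i : Fin n => (σ i : ℕ) < k ∧ k ≤ (i : ℕ)).card =
    (Finset.univ.filter fun i : Fin n => (i : ℕ) < k ∧ k ≤ (σ i : ℕ)).card := by
  have hAB : (Finset.univ.filter fun i : Fin n => k ≤ (σ i : ℕ)).card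
      = (Finset.univ.filter fun i : Fin n => k ≤ (i : ℕ)).card := by
    apply Finset.card_bij (fun i _ => σ i)
    · intro a ha
      simp only [Finset.mem_filter, Finset.mem_univ, true_and] at ha ⊢
      exact ha
    · intro a _ b _ hab
      exact σ.injective hab
    · intro b hb
      refine ⟨σ.symm b, ?_, by simp⟩
      simp only [Finset.mem_filter, Finset.mem_univ, true_and] at hb ⊢
      simpa using hb
  have e1 : (Finset.univ.filter fun i : Fin n => (σ i : ℕ) < k ∧ k ≤ (i : ℕ))
      = (Finset.univ.filter fun i : Fin n => k ≤ (i : ℕ)).filter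
          (fun i : Fin n => ¬ k ≤ (σ i : ℕ)) := by
    rw [Finset.filter_filter]
    apply Finset.filter_congr
    intro i _
    constructor
    · rintro ⟨h1, h2⟩; exact ⟨h2, by omega⟩
    · rintro ⟨h1, h2⟩; exact ⟨by omega, h1⟩
  have e2 : (Finset.univ.filter fun i : Fin n => (i : ℕ) < k ∧ k ≤ (σ i : ℕ))
      = (Finset.univ.filter fun i : Fin n => k ≤ (σ i : ℕ)).filter
          (fun i : Fin n => ¬ k ≤ (i : ℕ)) := by
    rw [Finset.filter_filter]
    apply Finset.filter_congr
    intro i _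
    constructor
    · rintro ⟨h1, h2⟩; exact ⟨h2, by omega⟩
    · rintro ⟨h1, h2⟩; exact ⟨by omega, h1⟩
  have e3 : ((Finset.univ.filter fun i : Fin n => k ≤ (i : ℕ)).filter
        (fun i : Fin n => k ≤ (σ i : ℕ)))
      = ((Finset.univ.filter fun i : Fin n => k ≤ (σ i : ℕ)).filter
        (fun i : Fin n => k ≤ (i : ℕ))) := by
    rw [Finset.filter_filter, Finset.filter_filter]
    apply Finset.filter_congr
    intro i _
    exact ⟨fun ⟨h1, h2⟩ => ⟨h2, h1⟩, fun ⟨h1, h2⟩ => ⟨h2, h1⟩⟩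
  have hs1 := Finset.card_filter_add_card_filter_not
    (s := Finset.univ.filter fun i : Fin n => k ≤ (i : ℕ)) (p := fun i : Fin n => k ≤ (σ i : ℕ))
  have hs2 := Finset.card_filter_add_card_filter_not
    (s := Finset.univ.filter fun i : Fin n => k ≤ (σ i : ℕ)) (p := fun i : Fin n => k ≤ (i : ℕ))
  have e3' := congrArg Finset.card e3
  rw [e1, e2]
  omega

lemma aux_prod_helper {M : Type*} [CommMonoid M] (n : ℕ) (c : ℕ → M)
    (f g : Fin n → ℕ) (hg : ∀ i, g i < n) :
    ∏ i ∈ Finset.univ.filter (fun i : Fin n => f i < g i),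
        ∏ k ∈ Finset.Ico (f i + 1) (g i + 1), c k
    = ∏ k ∈ Finset.range (n + 1),
        c k ^ (Finset.univ.filter (fun i : Fin n => f i < k ∧ k ≤ g i)).card := by
  classical
  have step1 : ∀ i : Fin n, (∏ k ∈ Finset.Ico (f i + 1) (g i + 1), c k)
      = ∏ k ∈ Finset.range (n + 1), if f i < k ∧ k ≤ g i then c k else 1 := by
    intro i
    rw [← Finset.prod_filter]
    apply Finset.prod_congr _ (fun _ _ => rfl)
    ext k
    simp only [Finset.mem_Ico, Finset.mem_filter, Finset.mem_range]
    have := hg i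
    omega
  calc ∏ i ∈ Finset.univ.filter (fun i : Fin n => f i < g i),
        ∏ k ∈ Finset.Ico (f i + 1) (g i + 1), c k
      = ∏ i ∈ Finset.univ.filter (fun i : Fin n => f i < g i),
        ∏ k ∈ Finset.range (n + 1), if f i < k ∧ k ≤ g i then c k else 1 :=
        Finset.prod_congr rfl (fun i _ => step1 i)
    _ = ∏ i : Fin n, ∏ k ∈ Finset.range (n + 1), if f i < k ∧ k ≤ g i then c k else 1 := by
        apply Finset.prod_subset (Finset.filter_subset _ _)
        intro i _ hi
        simp only [Finset.mem_filter, Finset.mem_univ, true_and] at hi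
        apply Finset.prod_eq_one
        intro k _
        rw [if_neg]
        rintro ⟨h1, h2⟩
        exact hi (by omega)
    _ = ∏ k ∈ Finset.range (n + 1), ∏ i : Fin n, if f i < k ∧ k ≤ g i then c k else 1 :=
        Finset.prod_comm
    _ = ∏ k ∈ Finset.range (n + 1),
        c k ^ (Finset.univ.filter (fun i : Fin n => f i < k ∧ k ≤ g i)).card := by
        apply Finset.prod_congr rfl
        intro k _
        rw [← Finset.prod_filter, Finset.prod_const]

end Counting

/-- For a divisibility chain `φ₁ ∣ φ₂ ∣ ⋯ ∣ φ_n ≠ 0` in `R/mR`, there is a choice of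
generating solutions `ψ i j` of the equations `φ_i = φ_j * x` (for `1 ≤ j < i ≤ n`)
such that for every permutation `σ` of `{1, …, n}` (modelled as `Fin n`, the element
`i : Fin n` corresponding to the integer `i + 1`), the product over all `i` with
`σ(i) < i` of `ψ i (σ i)` equals the product over all `i` with `σ(i) > i` of
`ψ (σ i) i`. -/
theorem exists_generating_solutions_perm_identity
    {R : Type*} [CommRing R] [IsDomain R] [IsBezout R]
    (hsr : HasStableRange15 R)
    (m : R) (hm0 : m ≠ 0) (hmu : ¬ IsUnit m)
    (n : ℕ) (φ : ℕ → R ⧸ Ideal.span {m})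
    (hchain : ∀ i : ℕ, 1 ≤ i → i < n → φ i ∣ φ (i + 1))
    (hφn : φ n ≠ 0) :
    ∃ ψ : ℕ → ℕ → R ⧸ Ideal.span {m},
      (∀ i j : ℕ, 1 ≤ j → j < i → i ≤ n →
        φ i = φ j * ψ i j ∧
        ∀ x : R ⧸ Ideal.span {m}, φ i = φ j * x → ψ i j ∣ x) ∧
      (∀ σ : Equiv.Perm (Fin n),
        ∏ i ∈ Finset.univ.filter (fun i : Fin n => σ i < i),
            ψ ((i : ℕ) + 1) ((σ i : ℕ) + 1) =
          ∏ i ∈ Finset.univ.filter (fun i : Fin n => i < σ i),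
            ψ ((σ i : ℕ) + 1) ((i : ℕ) + 1)) := by
  classical
  set p : R →+* R ⧸ Ideal.span {m} := Ideal.Quotient.mk (Ideal.span {m}) with hp
  -- lifts of φ
  choose A hA using fun k => Ideal.Quotient.mk_surjective (I := Ideal.span {m}) (φ k)
  -- per-step generating solutions
  have key : ∀ k : ℕ, ∃ q : R × R, 1 ≤ k → k < n →
      (p (A (k + 1)) = p (A k) * p q.1 ∧ (p q.1 ∣ p q.2) ∧
        IsBezout.gcd (A k) m * q.2 = IsBezout.gcd (A (k + 1)) m) := by
    intro k
    by_cases h : 1 ≤ k ∧ k < n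
    · obtain ⟨ψ, gen, h1, h2, h3⟩ := aux_step_lemma hsr m hm0 (A k) (A (k + 1))
        (by rw [hA, hA]; exact hchain k h.1 h.2)
      exact ⟨(ψ, gen), fun _ _ => ⟨h1, h2, h3⟩⟩
    · exact ⟨(1, 1), fun h1 h2 => absurd ⟨h1, h2⟩ h⟩
  choose q hq using key
  set c : ℕ → R ⧸ Ideal.span {m} := fun k => p (q k).1 with hc
  set ψfun : ℕ → ℕ → R ⧸ Ideal.span {m} := fun i j => ∏ k ∈ Finset.Ico j i, c k with hψfun
  -- telescoping: solutions
  have sol : ∀ j i : ℕ, 1 ≤ j → j ≤ i → i ≤ n → φ i = φ j * ψfun i j := by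
    intro j i hj hji hin
    induction i, hji using Nat.le_induction with
    | base => simp [hψfun]
    | succ i hji ih =>
      have hin' : i ≤ n := le_trans (Nat.le_succ i) hin
      have hi1 : 1 ≤ i := le_trans hj hji
      have hin2 : i < n := hin
      have h1 : φ (i + 1) = φ i * c i := by
        rw [← hA, ← hA]; exact (hq i hi1 hin2).1
      have h2 : ψfun (i + 1) j = ψfun i j * c i := by
        simp only [hψfun]
        exact Finset.prod_Ico_succ_top hji _
      rw [h1, ih hin', h2, mul_assoc]
  -- telescoping: gcd factors
  have gentel : ∀ j i : ℕ, 1 ≤ j → j ≤ i → i ≤ n →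
      IsBezout.gcd (A j) m * ∏ k ∈ Finset.Ico j i, (q k).2 = IsBezout.gcd (A i) m := by
    intro j i hj hji hin
    induction i, hji using Nat.le_induction with
    | base => simp
    | succ i hji ih =>
      have hin' : i ≤ n := le_trans (Nat.le_succ i) hin
      have hi1 : 1 ≤ i := le_trans hj hji
      have hin2 : i < n := hin
      rw [Finset.prod_Ico_succ_top hji, ← mul_assoc, ih hin', (hq i hi1 hin2).2.2]
  refine ⟨ψfun, ?_, ?_⟩
  · intro i j hj hji hin
    refine ⟨sol j i hj hji.le hin, ?_⟩
    intro x hx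
    obtain ⟨x', rfl⟩ := Ideal.Quotient.mk_surjective (I := Ideal.span {m}) x
    have hx' : p (A i) = p (A j) * p x' := by rw [hA, hA]; exact hx
    have hdvd : (∏ k ∈ Finset.Ico j i, (q k).2) ∣ x' :=
      aux_canonical_dvd_solution m hm0 (A j) (A i) x' _ hx' (gentel j i hj hji.le hin)
    calc ψfun i j ∣ ∏ k ∈ Finset.Ico j i, p (q k).2 := by
          apply Finset.prod_dvd_prod_of_dvd
          intro k hk
          rw [Finset.mem_Ico] at hk
          exact (hq k (le_trans hj hk.1) (lt_of_lt_of_le hk.2 hin)).2.1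
    _ = p (∏ k ∈ Finset.Ico j i, (q k).2) := (map_prod p _ _).symm
    _ ∣ p x' := map_dvd p hdvd
  · intro σ
    have hL : ∀ i : Fin n, ψfun ((i : ℕ) + 1) ((σ i : ℕ) + 1)
        = ∏ k ∈ Finset.Ico ((σ i : ℕ) + 1) ((i : ℕ) + 1), c k := fun i => rfl
    have hR : ∀ i : Fin n, ψfun ((σ i : ℕ) + 1) ((i : ℕ) + 1)
        = ∏ k ∈ Finset.Ico ((i : ℕ) + 1) ((σ i : ℕ) + 1), c k := fun i => rfl
    have hfilt1 : (Finset.univ.filter fun i : Fin n => σ i < i)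
        = Finset.univ.filter fun i : Fin n => (σ i : ℕ) < (i : ℕ) := by
      apply Finset.filter_congr
      intro i _
      exact Fin.lt_def
    have hfilt2 : (Finset.univ.filter fun i : Fin n => i < σ i)
        = Finset.univ.filter fun i : Fin n => (i : ℕ) < (σ i : ℕ) := by
      apply Finset.filter_congr
      intro i _
      exact Fin.lt_def
    calc ∏ i ∈ Finset.univ.filter (fun i : Fin n => σ i < i),
            ψfun ((i : ℕ) + 1) ((σ i : ℕ) + 1)
        = ∏ i ∈ Finset.univ.filter (fun i : Fin n => (σ i : ℕ) < (i : ℕ)),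
            ∏ k ∈ Finset.Ico ((σ i : ℕ) + 1) ((i : ℕ) + 1), c k := by
          rw [hfilt1]
      _ = ∏ k ∈ Finset.range (n + 1),
            c k ^ (Finset.univ.filter (fun i : Fin n => (σ i : ℕ) < k ∧ k ≤ (i : ℕ))).card :=
          aux_prod_helper n c (fun i => (σ i : ℕ)) (fun i => (i : ℕ)) (fun i => i.isLt)
      _ = ∏ k ∈ Finset.range (n + 1),
            c k ^ (Finset.univ.filter (fun i : Fin n => (i : ℕ) < k ∧ k ≤ (σ i : ℕ))).card := by
          apply Finset.prod_congr rfl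
          intro k _
          rw [aux_card_cross σ k]
      _ = ∏ i ∈ Finset.univ.filter (fun i : Fin n => (i : ℕ) < (σ i : ℕ)),
            ∏ k ∈ Finset.Ico ((i : ℕ) + 1) ((σ i : ℕ) + 1), c k :=
          (aux_prod_helper n c (fun i => (i : ℕ)) (fun i => (σ i : ℕ)) (fun i => (σ i).isLt)).symm
      _ = ∏ i ∈ Finset.univ.filter (fun i : Fin n => i < σ i),
            ψfun ((σ i : ℕ) + 1) ((i : ℕ) + 1) := by
          rw [hfilt2]
end

section
/- Let S be a commutative ring, n ≥ 2, and let ψ_{ij} ∈ S for 1 ≤ j < i ≤ n be elements satisfying: for every permutation σ of {1, …, n}, the product over all i with σ(i) < i of ψ_{i,σ(i)} equals the product over all i with σ(i) > i of ψ_{σ(i),i}. Then for arbitrary elements h_{ij} ∈ S (1 ≤ i, j ≤ n), the determinant of the n×n matrix A with entries A_{ij} = ψ_{ij}·h_{ij} for i > j and A_{ij} = h_{ij} for i ≤ j equals the determinant of the n×n matrix B with entries B_{ij} = ψ_{ji}·h_{ij} for i < j and B_{ij} = h_{ij} for i ≥ j. -/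
/-- If the elements `ψ i j` (used for `j < i`) satisfy the permutation identity
(for every permutation `σ`, the product of `ψ i (σ i)` over `i` with `σ(i) < i`
equals the product of `ψ (σ i) i` over `i` with `σ(i) > i`), then multiplying the
strictly lower triangular entries of a matrix by the `ψ`'s gives the same determinant
as multiplying the strictly upper triangular entries by the transposed `ψ`'s. -/
theorem det_lower_psi_eq_det_upper_psi
    {S : Type*} [CommRing S] (n : ℕ) (hn : 2 ≤ n)
    (ψ : Fin n → Fin n → S)
    (hψ : ∀ σ : Equiv.Perm (Fin n),
      ∏ i ∈ Finset.univ.filter (fun i : Fin n => σ i < i), ψ i (σ i) =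
        ∏ i ∈ Finset.univ.filter (fun i : Fin n => i < σ i), ψ (σ i) i)
    (h : Fin n → Fin n → S) :
    Matrix.det (Matrix.of fun i j : Fin n => if j < i then ψ i j * h i j else h i j) =
      Matrix.det (Matrix.of fun i j : Fin n => if i < j then ψ j i * h i j else h i j) := by
  rw [Matrix.det_apply, Matrix.det_apply]
  refine Finset.sum_congr rfl fun σ _ => ?_
  congr 1
  have key : ∀ (p : Fin n → Prop) [DecidablePred p] (g : Fin n → S),
      (∏ i, (if p i then g i * h (σ i) i else h (σ i) i)) =
        (∏ i ∈ Finset.univ.filter p, g i) * ∏ i, h (σ i) i := by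
    intro p _ g
    rw [Finset.prod_filter, ← Finset.prod_mul_distrib]
    exact Finset.prod_congr rfl fun i _ => by split_ifs <;> simp
  simp only [Matrix.of_apply]
  rw [key (fun i => i < σ i) (fun i => ψ (σ i) i),
    key (fun i => σ i < i) (fun i => ψ i (σ i)), hψ σ]
end

section
/- Let R be a commutative Bézout domain of stable range 1.5, m ∈ R neither zero nor a unit, and R_m = R/mR. Let n ≥ 2 and Φ = diag(φ₁, …, φ_n) over R_m with φ₁ ∣ φ₂ ∣ ⋯ ∣ φ_n and φ_n ≠ 0. If H is an invertible n×n matrix over R_m belonging to the Zelisko group G_Φ (i.e., H·Φ = Φ·S for some invertible matrix S over R_m), then for all i > j, every generating solution ψ of the equation φ_i = φ_j·x in R_m divides the (i, j) entry of H. -/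
/-- If `H` belongs to the Zelisko group of `Φ = diag(φ₁, …, φ_n)` (with
`φ₁ ∣ ⋯ ∣ φ_n ≠ 0`), then for `i > j` every generating solution of `φ_i = φ_j * x`
divides the `(i, j)` entry of `H`. -/
theorem zelisko_mem_entries_divisible
    {R : Type*} [CommRing R] [IsDomain R] [IsBezout R]
    (hsr : HasStableRange15 R)
    (m : R) (hm0 : m ≠ 0) (hmu : ¬ IsUnit m)
    (n : ℕ) (hn : 2 ≤ n)
    (φ : Fin n → R ⧸ Ideal.span {m})
    (hchain : ∀ i : Fin n, ∀ h : (i : ℕ) + 1 < n, φ i ∣ φ ⟨(i : ℕ) + 1, h⟩)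
    (hφn : φ ⟨n - 1, by omega⟩ ≠ 0)
    (H : Matrix (Fin n) (Fin n) (R ⧸ Ideal.span {m})) (hH : IsUnit H)
    (S : Matrix (Fin n) (Fin n) (R ⧸ Ideal.span {m})) (hS : IsUnit S)
    (hHS : H * Matrix.diagonal φ = Matrix.diagonal φ * S) :
    ∀ i j : Fin n, j < i →
      ∀ ψ : R ⧸ Ideal.span {m}, φ i = φ j * ψ →
        (∀ x : R ⧸ Ideal.span {m}, φ i = φ j * x → ψ ∣ x) →
        ψ ∣ H i j := by
  intro i j hij ψ hψ hgen
  have h1 : H i j * φ j = φ i * S i j := by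
    have := congrFun (congrFun hHS i) j
    simpa [Matrix.mul_diagonal, Matrix.diagonal_mul] using this
  have ht : φ j * (H i j - ψ * S i j) = 0 := by
    have : φ j * (ψ * S i j) = φ i * S i j := by rw [hψ]; ring
    rw [mul_sub, this, ← h1]; ring
  have hsol : φ i = φ j * (ψ + (H i j - ψ * S i j)) := by
    rw [mul_add, ht, add_zero, ← hψ]
  have hd := hgen _ hsol
  have hdt : ψ ∣ H i j - ψ * S i j := (dvd_add_right (dvd_refl ψ)).mp hd
  have : H i j = ψ * S i j + (H i j - ψ * S i j) := by ring
  rw [this]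
  exact dvd_add (Dvd.intro _ rfl) hdt
end

section
/- Let S be a commutative ring, n ≥ 1, Φ an n×n matrix over S, and Υ an invertible diagonal n×n matrix over S. Then the Zelisko group of Φ·Υ equals the Zelisko group of Φ, i.e., G_{Φ·Υ} = G_Φ. -/
/-- The Zelisko group of a square matrix `Φ` over a commutative ring: the set of
invertible matrices `H` for which there exists an invertible matrix `T` with
`H * Φ = Φ * T`. -/
def zeliskoGroup {S : Type*} [CommRing S] {n : ℕ} (Φ : Matrix (Fin n) (Fin n) S) :
    Set (Matrix (Fin n) (Fin n) S) :=
  {H | IsUnit H ∧ ∃ T : Matrix (Fin n) (Fin n) S, IsUnit T ∧ H * Φ = Φ * T}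

/-- Multiplying `Φ` on the right by an invertible diagonal matrix does not change its
Zelisko group. -/
theorem zeliskoGroup_mul_diagonal_unit
    {S : Type*} [CommRing S] (n : ℕ) (hn : 1 ≤ n)
    (Φ : Matrix (Fin n) (Fin n) S)
    (d : Fin n → S) (hd : IsUnit (Matrix.diagonal d)) :
    zeliskoGroup (Φ * Matrix.diagonal d) = zeliskoGroup Φ := by
  obtain ⟨u, hu⟩ := hd
  set D := Matrix.diagonal d with hD
  set E : Matrix (Fin n) (Fin n) S := ↑u⁻¹ with hE
  have h1 : D * E = 1 := by rw [hE, ← hu]; exact u.mul_inv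
  have h2 : E * D = 1 := by rw [hE, ← hu]; exact u.inv_mul
  have hEu : IsUnit E := u⁻¹.isUnit
  ext H
  simp only [zeliskoGroup, Set.mem_setOf_eq]
  constructor
  · rintro ⟨hH, T, hT, hEq⟩
    refine ⟨hH, D * T * E, (((Matrix.isUnit_iff_isUnit_det D).mpr ?_).mul hT).mul hEu, ?_⟩
    · exact (Matrix.isUnit_iff_isUnit_det D).mp ⟨u, hu⟩
    · have h3 : H * Φ = H * (Φ * D) * E := by
        rw [mul_assoc, mul_assoc, h1, mul_one]
      rw [h3, hEq, mul_assoc (Φ * D), mul_assoc Φ D, mul_assoc D]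
  · rintro ⟨hH, T, hT, hEq⟩
    refine ⟨hH, E * T * D, ((hEu.mul hT).mul ⟨u, hu⟩), ?_⟩
    calc H * (Φ * D) = H * Φ * D := by rw [mul_assoc]
      _ = Φ * T * D := by rw [hEq]
      _ = Φ * D * (E * T * D) := by
          rw [mul_assoc Φ D, ← mul_assoc D, ← mul_assoc D, h1, one_mul, mul_assoc]
end
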